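/- arXiv:1304.1989 — 2 statements merged into one kernel-verified Lean document; each statement's English description precedes it below -/
import Mathlib

section
/- (Pointwise estimates for differences of nonlinearities, Lemma 3.1.) Let N1, N2 satisfy assumption (A1). Then there exists a constant c* > 0 (depending only on the coefficients) such that for all u, v, u', v' ∈ ℂ, writing U = u − u', V = v − v' and r2 = |U|²·(|v|² + |v'|²) + (|u|² + |u'|²)·|V|², one has: |N1(u,v) − N1(u',v')|·|U| ≤ (c*/4)·r2, |N2(u,v) − N2(u',v')|·|V| ≤ (c*/4)·r2, |2·Re(i·m·V·conj(U) − i·(N1(u,v) − N1(u',v'))·conj(U))| ≤ m·(|U|² + |V|²) + c*·r2, |2·Re(i·m·U·conj(V) − i·(N2(u,v) − N2(u',v'))·conj(V))| ≤ m·(|U|² + |V|²) + c*·r2, and |Re(2i·(N1(u,v) − N1(u',v'))·conj(U) + 2i·(N2(u,v) − N2(u',v'))·conj(V))| ≤ c*·r2. -/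
open MeasureTheory

noncomputable section

/-- Assumption (A1): the nonlinearities have the cubic product form with complex
coefficients `α₁,…,α₅, β₁,…,β₅`. -/
def SatisfiesA1 (N1 N2 : ℂ → ℂ → ℂ) : Prop :=
  ∃ a1 a2 a3 a4 a5 b1 b2 b3 b4 b5 : ℂ,
    (∀ u v : ℂ, N1 u v =
      (a1 * u + a2 * (starRingEnd ℂ) u) *
        (a3 * (Complex.normSq v : ℂ) + a4 * v ^ 2 + a5 * ((starRingEnd ℂ) v) ^ 2)) ∧
    (∀ u v : ℂ, N2 u v =
      (b1 * v + b2 * (starRingEnd ℂ) v) *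
        (b3 * (Complex.normSq u : ℂ) + b4 * u ^ 2 + b5 * ((starRingEnd ℂ) u) ^ 2))

/-- Assumption (A2): `Re (i conj u N1(u,v) + i conj v N2(u,v)) = 0` for all `u, v ∈ ℂ`. -/
def SatisfiesA2 (N1 N2 : ℂ → ℂ → ℂ) : Prop :=
  ∀ u v : ℂ,
    (Complex.I * (starRingEnd ℂ) u * N1 u v + Complex.I * (starRingEnd ℂ) v * N2 u v).re = 0

/-- `(u,v)` is a classical (C¹) solution of the nonlinear Dirac system
`i(∂ₜu + ∂ₓu) = -m v + N1(u,v)`, `i(∂ₜv - ∂ₓv) = -m u + N2(u,v)` on `[0,T) × ℝ`.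
Time derivatives are one-sided (within `[0,∞)`). -/
def IsDiracSolution (m T : ℝ) (N1 N2 : ℂ → ℂ → ℂ) (u v : ℝ → ℝ → ℂ) : Prop :=
  ContDiffOn ℝ 1 (fun p : ℝ × ℝ => u p.1 p.2) (Set.Ico 0 T ×ˢ (Set.univ : Set ℝ)) ∧
  ContDiffOn ℝ 1 (fun p : ℝ × ℝ => v p.1 p.2) (Set.Ico 0 T ×ˢ (Set.univ : Set ℝ)) ∧
  (∀ t ∈ Set.Ico 0 T, ∀ x : ℝ,
    Complex.I * (derivWithin (fun s => u s x) (Set.Ici 0) t + deriv (fun y => u t y) x) =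
      -(m : ℂ) * v t x + N1 (u t x) (v t x)) ∧
  (∀ t ∈ Set.Ico 0 T, ∀ x : ℝ,
    Complex.I * (derivWithin (fun s => v s x) (Set.Ici 0) t - deriv (fun y => v t y) x) =
      -(m : ℂ) * u t x + N2 (u t x) (v t x))

/-- `(u,v)` is a global classical (C¹) solution of the nonlinear Dirac system on `[0,∞) × ℝ`. -/
def IsGlobalDiracSolution (m : ℝ) (N1 N2 : ℂ → ℂ → ℂ) (u v : ℝ → ℝ → ℂ) : Prop :=
  ContDiffOn ℝ 1 (fun p : ℝ × ℝ => u p.1 p.2) (Set.Ici 0 ×ˢ (Set.univ : Set ℝ)) ∧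
  ContDiffOn ℝ 1 (fun p : ℝ × ℝ => v p.1 p.2) (Set.Ici 0 ×ˢ (Set.univ : Set ℝ)) ∧
  (∀ t ∈ Set.Ici (0 : ℝ), ∀ x : ℝ,
    Complex.I * (derivWithin (fun s => u s x) (Set.Ici 0) t + deriv (fun y => u t y) x) =
      -(m : ℂ) * v t x + N1 (u t x) (v t x)) ∧
  (∀ t ∈ Set.Ici (0 : ℝ), ∀ x : ℝ,
    Complex.I * (derivWithin (fun s => v s x) (Set.Ici 0) t - deriv (fun y => v t y) x) =
      -(m : ℂ) * u t x + N2 (u t x) (v t x))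

/-- The charge `L₀(t) = ∫ (|u(t,x)|² + |v(t,x)|²) dx`. -/
noncomputable def L0fun (u v : ℝ → ℝ → ℂ) (t : ℝ) : ℝ :=
  ∫ x : ℝ, (Complex.normSq (u t x) + Complex.normSq (v t x))

/-- `D₀(t) = ∫ |u(t,x)|² |v(t,x)|² dx`. -/
noncomputable def D0fun (u v : ℝ → ℝ → ℂ) (t : ℝ) : ℝ :=
  ∫ x : ℝ, Complex.normSq (u t x) * Complex.normSq (v t x)

/-- The Bony functional `Q₀(t) = ∬_{x<y} |u(t,x)|² |v(t,y)|² dx dy`. -/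
noncomputable def Q0fun (u v : ℝ → ℝ → ℂ) (t : ℝ) : ℝ :=
  ∫ p in {p : ℝ × ℝ | p.1 < p.2}, Complex.normSq (u t p.1) * Complex.normSq (v t p.2)

/-- Pointwise quantity `r₂ = |U|²(|v|²+|v'|²) + (|u|²+|u'|²)|V|²` for `U = u - u'`, `V = v - v'`. -/
noncomputable def r2p (a b a' b' : ℂ) : ℝ :=
  Complex.normSq (a - a') * (Complex.normSq b + Complex.normSq b') +
    (Complex.normSq a + Complex.normSq a') * Complex.normSq (b - b')

/-- `r₂(t,x,y)` for two solutions. -/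
noncomputable def r2fun (u v u' v' : ℝ → ℝ → ℂ) (t x y : ℝ) : ℝ :=
  Complex.normSq (u t x - u' t x) * (Complex.normSq (v t y) + Complex.normSq (v' t y)) +
    (Complex.normSq (u t x) + Complex.normSq (u' t x)) * Complex.normSq (v t y - v' t y)

/-- `L₁(t) = ∫ (|U(t,x)|² + |V(t,x)|²) dx`. -/
noncomputable def L1fun (u v u' v' : ℝ → ℝ → ℂ) (t : ℝ) : ℝ :=
  ∫ x : ℝ, (Complex.normSq (u t x - u' t x) + Complex.normSq (v t x - v' t x))

/-- `Q₁(t) = ∬_{x<y} r₂(t,x,y) dx dy`. -/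
noncomputable def Q1fun (u v u' v' : ℝ → ℝ → ℂ) (t : ℝ) : ℝ :=
  ∫ p in {p : ℝ × ℝ | p.1 < p.2}, r2fun u v u' v' t p.1 p.2

/-- `D₁(t) = ∫ r₂(t,x,x) dx`. -/
noncomputable def D1fun (u v u' v' : ℝ → ℝ → ℂ) (t : ℝ) : ℝ :=
  ∫ x : ℝ, r2fun u v u' v' t x x

/-- `h₃(t) = 2m L₀(0) t + 2m L₀'(0) t + ∫₀ᵗ (c D₀(τ) + c D₀'(τ)) dτ`. -/
noncomputable def h3fun (m c : ℝ) (u v u' v' : ℝ → ℝ → ℂ) (t : ℝ) : ℝ :=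
  2 * m * L0fun u v 0 * t + 2 * m * L0fun u' v' 0 * t +
    ∫ τ in (0 : ℝ)..t, (c * D0fun u v τ + c * D0fun u' v' τ)

/-- The `L²` distance `‖f - g‖_{L²}` of two functions `ℝ → ℂ`. -/
noncomputable def l2dist (f g : ℝ → ℂ) : ℝ :=
  Real.sqrt (∫ x : ℝ, Complex.normSq (f x - g x))

lemma abs_diff_bound (a1 a2 a3 a4 a5 u v u' v' : ℂ) :
    ‖(a1 * u + a2 * (starRingEnd ℂ) u) *
        (a3 * (Complex.normSq v : ℂ) + a4 * v ^ 2 + a5 * ((starRingEnd ℂ) v) ^ 2) -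
      (a1 * u' + a2 * (starRingEnd ℂ) u') *
        (a3 * (Complex.normSq v' : ℂ) + a4 * v' ^ 2 + a5 * ((starRingEnd ℂ) v') ^ 2)‖ ≤
      (‖a1‖ + ‖a2‖) * (‖a3‖ + ‖a4‖ + ‖a5‖) *
        (‖u - u'‖ * ‖v‖ ^ 2 +
          ‖u'‖ * ((‖v‖ + ‖v'‖) * ‖v - v'‖)) := by
  set A := a1 * u + a2 * (starRingEnd ℂ) u with hA
  set A' := a1 * u' + a2 * (starRingEnd ℂ) u' with hA'
  set B := a3 * (Complex.normSq v : ℂ) + a4 * v ^ 2 + a5 * ((starRingEnd ℂ) v) ^ 2 with hB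
  set B' := a3 * (Complex.normSq v' : ℂ) + a4 * v' ^ 2 + a5 * ((starRingEnd ℂ) v') ^ 2 with hB'
  have hsplit : A * B - A' * B' = (A - A') * B + A' * (B - B') := by ring
  have h1 : ‖A - A'‖ ≤ (‖a1‖ + ‖a2‖) * ‖u - u'‖ := by
    have : A - A' = a1 * (u - u') + a2 * (starRingEnd ℂ) (u - u') := by
      rw [hA, hA', map_sub]; ring
    rw [this]
    calc ‖a1 * (u - u') + a2 * (starRingEnd ℂ) (u - u')‖
        ≤ ‖a1 * (u - u')‖ + ‖a2 * (starRingEnd ℂ) (u - u')‖ :=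
          norm_add_le _ _
      _ = (‖a1‖ + ‖a2‖) * ‖u - u'‖ := by
          rw [norm_mul, norm_mul, Complex.norm_conj]; ring
  have hB_le : ‖B‖ ≤ (‖a3‖ + ‖a4‖ + ‖a5‖) *
      ‖v‖ ^ 2 := by
    calc ‖B‖ ≤ ‖a3 * (Complex.normSq v : ℂ)‖ +
          ‖a4 * v ^ 2‖ + ‖a5 * ((starRingEnd ℂ) v) ^ 2‖ := by
          exact le_trans (norm_add_le _ _)
            (add_le_add_left (norm_add_le _ _) _)
      _ = (‖a3‖ + ‖a4‖ + ‖a5‖) * ‖v‖ ^ 2 := by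
          rw [norm_mul, norm_mul, norm_mul, norm_pow, norm_pow, Complex.norm_conj,
            Complex.norm_real, Real.norm_eq_abs, abs_of_nonneg (Complex.normSq_nonneg v),
            ← Complex.sq_norm]; ring
  have hA'_le : ‖A'‖ ≤ (‖a1‖ + ‖a2‖) * ‖u'‖ := by
    calc ‖A'‖ ≤ ‖a1 * u'‖ + ‖a2 * (starRingEnd ℂ) u'‖ :=
          norm_add_le _ _
      _ = (‖a1‖ + ‖a2‖) * ‖u'‖ := by
          rw [norm_mul, norm_mul, Complex.norm_conj]; ring
  have hnsq : ‖(Complex.normSq v : ℂ) - (Complex.normSq v' : ℂ)‖ ≤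
      (‖v‖ + ‖v'‖) * ‖v - v'‖ := by
    rw [← Complex.ofReal_sub, Complex.norm_real, Real.norm_eq_abs, ← Complex.sq_norm, ← Complex.sq_norm]
    have h2 : |‖v‖ - ‖v'‖| ≤ ‖v - v'‖ :=
      abs_norm_sub_norm_le v v'
    calc |‖v‖ ^ 2 - ‖v'‖ ^ 2|
        = (‖v‖ + ‖v'‖) * |‖v‖ - ‖v'‖| := by
          rw [← abs_of_nonneg (by positivity : (0:ℝ) ≤ ‖v‖ + ‖v'‖),
            ← abs_mul]; ring_nf
      _ ≤ (‖v‖ + ‖v'‖) * ‖v - v'‖ := by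
          apply mul_le_mul_of_nonneg_left h2; positivity
  have hsq : ‖v ^ 2 - v' ^ 2‖ ≤ (‖v‖ + ‖v'‖) *
      ‖v - v'‖ := by
    have : v ^ 2 - v' ^ 2 = (v + v') * (v - v') := by ring
    rw [this, norm_mul]
    apply mul_le_mul_of_nonneg_right (norm_add_le _ _) (norm_nonneg _)
  have hcsq : ‖((starRingEnd ℂ) v) ^ 2 - ((starRingEnd ℂ) v') ^ 2‖ ≤
      (‖v‖ + ‖v'‖) * ‖v - v'‖ := by
    have : ((starRingEnd ℂ) v) ^ 2 - ((starRingEnd ℂ) v') ^ 2 =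
        (starRingEnd ℂ) (v ^ 2 - v' ^ 2) := by rw [map_sub, map_pow, map_pow]
    rw [this, Complex.norm_conj]; exact hsq
  have hBd : ‖B - B'‖ ≤ (‖a3‖ + ‖a4‖ + ‖a5‖) *
      ((‖v‖ + ‖v'‖) * ‖v - v'‖) := by
    have hBB : B - B' = a3 * ((Complex.normSq v : ℂ) - (Complex.normSq v' : ℂ)) +
        a4 * (v ^ 2 - v' ^ 2) +
        a5 * (((starRingEnd ℂ) v) ^ 2 - ((starRingEnd ℂ) v') ^ 2) := by
      rw [hB, hB']; ring
    rw [hBB]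
    have := norm_add_le (a3 * ((Complex.normSq v : ℂ) - (Complex.normSq v' : ℂ)) +
        a4 * (v ^ 2 - v' ^ 2)) (a5 * (((starRingEnd ℂ) v) ^ 2 - ((starRingEnd ℂ) v') ^ 2))
    refine le_trans this ?_
    refine le_trans (add_le_add_left (norm_add_le _ _) _) ?_
    rw [norm_mul, norm_mul, norm_mul]
    have n3 := norm_nonneg a3
    have n4 := norm_nonneg a4
    have n5 := norm_nonneg a5
    nlinarith [mul_le_mul_of_nonneg_left hnsq n3, mul_le_mul_of_nonneg_left hsq n4,
      mul_le_mul_of_nonneg_left hcsq n5]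
  calc ‖A * B - A' * B'‖ ≤ ‖(A - A') * B‖ + ‖A' * (B - B')‖ := by
        rw [hsplit]; exact norm_add_le _ _
    _ = ‖A - A'‖ * ‖B‖ + ‖A'‖ * ‖B - B'‖ := by
        rw [norm_mul, norm_mul]
    _ ≤ (‖a1‖ + ‖a2‖) * (‖a3‖ + ‖a4‖ + ‖a5‖) *
        (‖u - u'‖ * ‖v‖ ^ 2 +
          ‖u'‖ * ((‖v‖ + ‖v'‖) * ‖v - v'‖)) := by
        have nA := norm_nonneg (A - A')
        have nB := norm_nonneg B
        have nA' := norm_nonneg A'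
        have nBd := norm_nonneg (B - B')
        nlinarith [mul_le_mul h1 hB_le nB (by positivity),
          mul_le_mul hA'_le hBd nBd (by positivity)]

lemma key_bound (a1 a2 a3 a4 a5 u v u' v' : ℂ) :
    ‖(a1 * u + a2 * (starRingEnd ℂ) u) *
        (a3 * (Complex.normSq v : ℂ) + a4 * v ^ 2 + a5 * ((starRingEnd ℂ) v) ^ 2) -
      (a1 * u' + a2 * (starRingEnd ℂ) u') *
        (a3 * (Complex.normSq v' : ℂ) + a4 * v' ^ 2 + a5 * ((starRingEnd ℂ) v') ^ 2)‖ *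
      ‖u - u'‖ ≤
    2 * ((‖a1‖ + ‖a2‖) * (‖a3‖ + ‖a4‖ + ‖a5‖)) *
      r2p u v u' v' := by
  have hb := abs_diff_bound a1 a2 a3 a4 a5 u v u' v'
  set X := ‖u - u'‖ with hX
  set Y := ‖v - v'‖ with hY
  set p := ‖u‖ with hp
  set p' := ‖u'‖ with hp'
  set q := ‖v‖ with hq
  set q' := ‖v'‖ with hq'
  have hr2 : r2p u v u' v' = X ^ 2 * (q ^ 2 + q' ^ 2) + (p ^ 2 + p' ^ 2) * Y ^ 2 := by
    simp only [r2p, ← Complex.sq_norm, hX, hY, hp, hp', hq, hq']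
  rw [hr2]
  have hKn : (0:ℝ) ≤ (‖a1‖ + ‖a2‖) *
      (‖a3‖ + ‖a4‖ + ‖a5‖) := by positivity
  set K := (‖a1‖ + ‖a2‖) *
      (‖a3‖ + ‖a4‖ + ‖a5‖) with hK
  have hXn : (0:ℝ) ≤ X := norm_nonneg _
  have hYn : (0:ℝ) ≤ Y := norm_nonneg _
  have hpn : (0:ℝ) ≤ p := norm_nonneg _
  have hp'n : (0:ℝ) ≤ p' := norm_nonneg _
  have hqn : (0:ℝ) ≤ q := norm_nonneg _
  have hq'n : (0:ℝ) ≤ q' := norm_nonneg _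
  have hmul := mul_le_mul_of_nonneg_right hb hXn
  refine le_trans hmul ?_
  have hstep : (X * q ^ 2 + p' * ((q + q') * Y)) * X ≤
      2 * (X ^ 2 * (q ^ 2 + q' ^ 2) + (p ^ 2 + p' ^ 2) * Y ^ 2) := by
    nlinarith [sq_nonneg (X * (q + q') - p' * Y), sq_nonneg (X * (q - q')),
      sq_nonneg (X * q'), mul_nonneg (mul_nonneg hpn hpn) (mul_nonneg hYn hYn),
      mul_nonneg hXn (mul_nonneg hYn hp'n)]
  calc K * (X * q ^ 2 + p' * ((q + q') * Y)) * X
      = K * ((X * q ^ 2 + p' * ((q + q') * Y)) * X) := by ring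
    _ ≤ K * (2 * (X ^ 2 * (q ^ 2 + q' ^ 2) + (p ^ 2 + p' ^ 2) * Y ^ 2)) :=
        mul_le_mul_of_nonneg_left hstep hKn
    _ = 2 * K * (X ^ 2 * (q ^ 2 + q' ^ 2) + (p ^ 2 + p' ^ 2) * Y ^ 2) := by ring

/-- Pointwise estimates for differences of the nonlinearities (Lemma 3.1): if `N1, N2`
satisfy (A1) with coefficients `a1,…,a5, b1,…,b5`, there is `c* > 0` (depending only on
the coefficients) such that for all `u, v, u', v' ∈ ℂ`, with `U = u - u'`, `V = v - v'`
and `r₂ = |U|²(|v|² + |v'|²) + (|u|² + |u'|²)|V|²`: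
`|N1(u,v) - N1(u',v')||U| ≤ (c*/4) r₂`, `|N2(u,v) - N2(u',v')||V| ≤ (c*/4) r₂`,
`|2 Re(i m V conj U - i (N1(u,v) - N1(u',v')) conj U)| ≤ m(|U|² + |V|²) + c* r₂`,
`|2 Re(i m U conj V - i (N2(u,v) - N2(u',v')) conj V)| ≤ m(|U|² + |V|²) + c* r₂`, and
`|Re(2i (N1(u,v) - N1(u',v')) conj U + 2i (N2(u,v) - N2(u',v')) conj V)| ≤ c* r₂`. -/
theorem pointwise_difference_estimates (m : ℝ) (hm : 0 ≤ m)
    (a1 a2 a3 a4 a5 b1 b2 b3 b4 b5 : ℂ) (N1 N2 : ℂ → ℂ → ℂ)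
    (hN1 : ∀ u v : ℂ, N1 u v =
      (a1 * u + a2 * (starRingEnd ℂ) u) *
        (a3 * (Complex.normSq v : ℂ) + a4 * v ^ 2 + a5 * ((starRingEnd ℂ) v) ^ 2))
    (hN2 : ∀ u v : ℂ, N2 u v =
      (b1 * v + b2 * (starRingEnd ℂ) v) *
        (b3 * (Complex.normSq u : ℂ) + b4 * u ^ 2 + b5 * ((starRingEnd ℂ) u) ^ 2)) :
    ∃ cs > 0, ∀ u v u' v' : ℂ,
      ‖N1 u v - N1 u' v'‖ * ‖u - u'‖ ≤ cs / 4 * r2p u v u' v' ∧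
      ‖N2 u v - N2 u' v'‖ * ‖v - v'‖ ≤ cs / 4 * r2p u v u' v' ∧
      |2 * (Complex.I * (m : ℂ) * (v - v') * (starRingEnd ℂ) (u - u') -
          Complex.I * (N1 u v - N1 u' v') * (starRingEnd ℂ) (u - u')).re| ≤
        m * (Complex.normSq (u - u') + Complex.normSq (v - v')) + cs * r2p u v u' v' ∧
      |2 * (Complex.I * (m : ℂ) * (u - u') * (starRingEnd ℂ) (v - v') -
          Complex.I * (N2 u v - N2 u' v') * (starRingEnd ℂ) (v - v')).re| ≤
        m * (Complex.normSq (u - u') + Complex.normSq (v - v')) + cs * r2p u v u' v' ∧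
      |(2 * Complex.I * (N1 u v - N1 u' v') * (starRingEnd ℂ) (u - u') +
          2 * Complex.I * (N2 u v - N2 u' v') * (starRingEnd ℂ) (v - v')).re| ≤
        cs * r2p u v u' v' := by
  set K1 := (‖a1‖ + ‖a2‖) *
      (‖a3‖ + ‖a4‖ + ‖a5‖) with hK1
  set K2 := (‖b1‖ + ‖b2‖) *
      (‖b3‖ + ‖b4‖ + ‖b5‖) with hK2
  have hK1n : (0:ℝ) ≤ K1 := by positivity
  have hK2n : (0:ℝ) ≤ K2 := by positivity
  refine ⟨8 * (K1 + K2) + 8, by linarith, fun u v u' v' => ?_⟩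
  set cs := 8 * (K1 + K2) + 8 with hcs
  have hr : (0:ℝ) ≤ r2p u v u' v' := by
    unfold r2p
    exact add_nonneg (mul_nonneg (Complex.normSq_nonneg _)
        (add_nonneg (Complex.normSq_nonneg _) (Complex.normSq_nonneg _)))
      (mul_nonneg (add_nonneg (Complex.normSq_nonneg _) (Complex.normSq_nonneg _))
        (Complex.normSq_nonneg _))
  have h1 : ‖N1 u v - N1 u' v'‖ * ‖u - u'‖ ≤
      2 * K1 * r2p u v u' v' := by
    rw [hN1, hN1]; exact key_bound a1 a2 a3 a4 a5 u v u' v'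
  have h2 : ‖N2 u v - N2 u' v'‖ * ‖v - v'‖ ≤
      2 * K2 * r2p u v u' v' := by
    rw [hN2, hN2]
    have h := key_bound b1 b2 b3 b4 b5 v u v' u'
    have hsw : r2p v u v' u' = r2p u v u' v' := by unfold r2p; ring
    rw [hsw] at h
    exact h
  set X := ‖u - u'‖ with hX
  set Y := ‖v - v'‖ with hY
  have hXn : (0:ℝ) ≤ X := norm_nonneg _
  have hYn : (0:ℝ) ≤ Y := norm_nonneg _
  have hnU : Complex.normSq (u - u') = X ^ 2 := (Complex.sq_norm _).symm
  have hnV : Complex.normSq (v - v') = Y ^ 2 := (Complex.sq_norm _).symm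
  refine ⟨le_trans h1 (by nlinarith), le_trans h2 (by nlinarith), ?_, ?_, ?_⟩
  · have hd : ‖Complex.I * (m : ℂ) * (v - v') * (starRingEnd ℂ) (u - u') -
        Complex.I * (N1 u v - N1 u' v') * (starRingEnd ℂ) (u - u')‖ ≤
        m * Y * X + ‖N1 u v - N1 u' v'‖ * X := by
      have ht := norm_add_le (Complex.I * (m : ℂ) * (v - v') * (starRingEnd ℂ) (u - u'))
        (-(Complex.I * (N1 u v - N1 u' v') * (starRingEnd ℂ) (u - u')))
      rw [← sub_eq_add_neg, norm_neg] at ht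
      refine le_trans ht (le_of_eq ?_)
      rw [norm_mul, norm_mul, norm_mul, norm_mul, norm_mul, Complex.norm_I, Complex.norm_real, Real.norm_eq_abs,
        Complex.norm_conj, abs_of_nonneg hm]
      ring
    have hre : |2 * (Complex.I * (m : ℂ) * (v - v') * (starRingEnd ℂ) (u - u') -
        Complex.I * (N1 u v - N1 u' v') * (starRingEnd ℂ) (u - u')).re| ≤
        2 * (m * Y * X + ‖N1 u v - N1 u' v'‖ * X) := by
      rw [abs_mul, abs_two]
      exact mul_le_mul_of_nonneg_left (le_trans (Complex.abs_re_le_norm _) hd) (by norm_num)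
    refine le_trans hre ?_
    rw [hnU, hnV]
    nlinarith [mul_nonneg hm (sq_nonneg (X - Y))]
  · have hd : ‖Complex.I * (m : ℂ) * (u - u') * (starRingEnd ℂ) (v - v') -
        Complex.I * (N2 u v - N2 u' v') * (starRingEnd ℂ) (v - v')‖ ≤
        m * X * Y + ‖N2 u v - N2 u' v'‖ * Y := by
      have ht := norm_add_le (Complex.I * (m : ℂ) * (u - u') * (starRingEnd ℂ) (v - v'))
        (-(Complex.I * (N2 u v - N2 u' v') * (starRingEnd ℂ) (v - v')))
      rw [← sub_eq_add_neg, norm_neg] at ht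
      refine le_trans ht (le_of_eq ?_)
      rw [norm_mul, norm_mul, norm_mul, norm_mul, norm_mul, Complex.norm_I, Complex.norm_real, Real.norm_eq_abs,
        Complex.norm_conj, abs_of_nonneg hm]
      ring
    have hre : |2 * (Complex.I * (m : ℂ) * (u - u') * (starRingEnd ℂ) (v - v') -
        Complex.I * (N2 u v - N2 u' v') * (starRingEnd ℂ) (v - v')).re| ≤
        2 * (m * X * Y + ‖N2 u v - N2 u' v'‖ * Y) := by
      rw [abs_mul, abs_two]
      exact mul_le_mul_of_nonneg_left (le_trans (Complex.abs_re_le_norm _) hd) (by norm_num)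
    refine le_trans hre ?_
    rw [hnU, hnV]
    nlinarith [mul_nonneg hm (sq_nonneg (X - Y))]
  · have hd : ‖2 * Complex.I * (N1 u v - N1 u' v') * (starRingEnd ℂ) (u - u') +
        2 * Complex.I * (N2 u v - N2 u' v') * (starRingEnd ℂ) (v - v')‖ ≤
        2 * (‖N1 u v - N1 u' v'‖ * X) +
        2 * (‖N2 u v - N2 u' v'‖ * Y) := by
      refine le_trans (norm_add_le _ _) (le_of_eq ?_)
      rw [norm_mul, norm_mul, norm_mul, norm_mul, norm_mul, norm_mul, Complex.norm_I,
        Complex.norm_conj, Complex.norm_conj, Complex.norm_two]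
      ring
    refine le_trans (le_trans (Complex.abs_re_le_norm _) hd) ?_
    nlinarith
end
end

section
/- (Cauchy property of the solution sequence, Theorem 1.2, convergence part.) Let N1, N2 satisfy (A1) and (A2) and let δ > 0 be the smallness constant of the L² stability estimate. Suppose (u_{0k}, v_{0k}), k ∈ ℕ, are smooth compactly supported initial data with ‖u_{0k}‖²_{L²} + ‖v_{0k}‖²_{L²} < δ for all k, such that (u_{0k}, v_{0k}) is a Cauchy sequence in L²(ℝ;ℂ²). Let (u_k, v_k) be the corresponding global classical solutions of the nonlinear Dirac system. Then for every T ≥ 0 the sequence (u_k, v_k) is Cauchy in C([0,T]; L²(ℝ;ℂ²)); i.e., sup_{0 ≤ t ≤ T} (‖u_k(t,·) − u_j(t,·)‖_{L²} + ‖v_k(t,·) − v_j(t,·)‖_{L²}) → 0 as k, j → ∞, and hence there is (u_∞, v_∞) ∈ C([0,∞); L²(ℝ;ℂ²)) with ‖u_k − u_∞‖_{C([0,T];L²)} + ‖v_k − v_∞‖_{C([0,T];L²)} → 0 for every T ≥ 0. -/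
open MeasureTheory

noncomputable section

section DiracAux
open Set Filter Topology

lemma uniqueDiffS : UniqueDiffOn ℝ ((Set.Ici (0:ℝ)) ×ˢ (Set.univ : Set ℝ)) :=
  (uniqueDiffOn_Ici 0).prod uniqueDiffOn_univ

variable {U : ℝ → ℝ → ℂ}

/-- time derivative -/
def Dt (U : ℝ → ℝ → ℂ) : ℝ → ℝ → ℂ := fun t x =>
  fderivWithin ℝ (fun p : ℝ × ℝ => U p.1 p.2) ((Set.Ici (0:ℝ)) ×ˢ (Set.univ : Set ℝ)) (t, x) (1, 0)

/-- space derivative -/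
def Dx (U : ℝ → ℝ → ℂ) : ℝ → ℝ → ℂ := fun t x =>
  fderivWithin ℝ (fun p : ℝ × ℝ => U p.1 p.2) ((Set.Ici (0:ℝ)) ×ˢ (Set.univ : Set ℝ)) (t, x) (0, 1)

lemma slice_t (hU : ContDiffOn ℝ 1 (fun p : ℝ × ℝ => U p.1 p.2) ((Set.Ici (0:ℝ)) ×ˢ (Set.univ : Set ℝ)))
    {t : ℝ} (ht : 0 ≤ t) (x : ℝ) :
    HasDerivWithinAt (fun s => U s x) (Dt U t x) (Set.Ici 0) t := by
  have hdiff := hU.differentiableOn one_ne_zero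
  have hF : HasFDerivWithinAt (fun p : ℝ × ℝ => U p.1 p.2)
      (fderivWithin ℝ (fun p : ℝ × ℝ => U p.1 p.2) ((Set.Ici (0:ℝ)) ×ˢ (Set.univ : Set ℝ)) (t, x))
      ((Set.Ici (0:ℝ)) ×ˢ (Set.univ : Set ℝ)) (t, x) :=
    (hdiff (t, x) ⟨ht, mem_univ _⟩).hasFDerivWithinAt
  have hι : HasDerivWithinAt (fun s : ℝ => ((s, x) : ℝ × ℝ)) ((1:ℝ), (0:ℝ)) (Set.Ici 0) t :=
    ((hasDerivAt_id t).prodMk (hasDerivAt_const t x)).hasDerivWithinAt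
  exact hF.comp_hasDerivWithinAt t hι (fun s hs => Set.mk_mem_prod hs (mem_univ _))

lemma slice_x (hU : ContDiffOn ℝ 1 (fun p : ℝ × ℝ => U p.1 p.2) ((Set.Ici (0:ℝ)) ×ˢ (Set.univ : Set ℝ)))
    {t : ℝ} (ht : 0 ≤ t) (x : ℝ) :
    HasDerivAt (fun y => U t y) (Dx U t x) x := by
  have hdiff := hU.differentiableOn one_ne_zero
  have hF : HasFDerivWithinAt (fun p : ℝ × ℝ => U p.1 p.2)
      (fderivWithin ℝ (fun p : ℝ × ℝ => U p.1 p.2) ((Set.Ici (0:ℝ)) ×ˢ (Set.univ : Set ℝ)) (t, x))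
      ((Set.Ici (0:ℝ)) ×ˢ (Set.univ : Set ℝ)) (t, x) :=
    (hdiff (t, x) ⟨ht, mem_univ _⟩).hasFDerivWithinAt
  have hκ : HasDerivWithinAt (fun y : ℝ => ((t, y) : ℝ × ℝ)) ((0:ℝ), (1:ℝ)) Set.univ x :=
    ((hasDerivAt_const x t).prodMk (hasDerivAt_id x)).hasDerivWithinAt
  have := hF.comp_hasDerivWithinAt x hκ (fun y _ => ⟨ht, mem_univ _⟩)
  exact (hasDerivWithinAt_univ.mp this)

lemma slice_t_derivWithin (hU : ContDiffOn ℝ 1 (fun p : ℝ × ℝ => U p.1 p.2) ((Set.Ici (0:ℝ)) ×ˢ (Set.univ : Set ℝ)))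
    {t : ℝ} (ht : 0 ≤ t) (x : ℝ) :
    derivWithin (fun s => U s x) (Set.Ici 0) t = Dt U t x :=
  (slice_t hU ht x).derivWithin ((uniqueDiffOn_Ici 0) t ht)

lemma slice_x_deriv (hU : ContDiffOn ℝ 1 (fun p : ℝ × ℝ => U p.1 p.2) ((Set.Ici (0:ℝ)) ×ˢ (Set.univ : Set ℝ)))
    {t : ℝ} (ht : 0 ≤ t) (x : ℝ) :
    deriv (fun y => U t y) x = Dx U t x :=
  (slice_x hU ht x).deriv

lemma cont_Dt (hU : ContDiffOn ℝ 1 (fun p : ℝ × ℝ => U p.1 p.2) ((Set.Ici (0:ℝ)) ×ˢ (Set.univ : Set ℝ))) :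
    ContinuousOn (fun p : ℝ × ℝ => Dt U p.1 p.2) ((Set.Ici (0:ℝ)) ×ˢ (Set.univ : Set ℝ)) := by
  have h := hU.continuousOn_fderivWithin uniqueDiffS le_rfl
  exact (h.clm_apply continuousOn_const)

lemma cont_Dx (hU : ContDiffOn ℝ 1 (fun p : ℝ × ℝ => U p.1 p.2) ((Set.Ici (0:ℝ)) ×ˢ (Set.univ : Set ℝ))) :
    ContinuousOn (fun p : ℝ × ℝ => Dx U p.1 p.2) ((Set.Ici (0:ℝ)) ×ˢ (Set.univ : Set ℝ)) := by
  have h := hU.continuousOn_fderivWithin uniqueDiffS le_rfl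
  exact (h.clm_apply continuousOn_const)

lemma slice_cont {α : Type*} [TopologicalSpace α] {U : ℝ → ℝ → α}
    (hU : ContinuousOn (fun p : ℝ × ℝ => U p.1 p.2) ((Set.Ici (0:ℝ)) ×ˢ (Set.univ : Set ℝ)))
    {t : ℝ} (ht : 0 ≤ t) : Continuous (U t) := by
  have : Continuous (fun x : ℝ => ((t, x) : ℝ × ℝ)) := continuous_const.prodMk continuous_id
  exact hU.comp_continuous this (fun x => ⟨ht, mem_univ _⟩)

lemma slice_cont_t {α : Type*} [TopologicalSpace α] {U : ℝ → ℝ → α}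
    (hU : ContinuousOn (fun p : ℝ × ℝ => U p.1 p.2) ((Set.Ici (0:ℝ)) ×ˢ (Set.univ : Set ℝ)))
    (x : ℝ) : ContinuousOn (fun s => U s x) (Set.Ici 0) := by
  have h1 : ContinuousOn (fun s : ℝ => ((s, x) : ℝ × ℝ)) (Set.Ici 0) :=
    (continuous_id.prodMk continuous_const).continuousOn
  exact hU.comp h1 (fun s hs => ⟨hs, mem_univ _⟩)

lemma hasDerivWithinAt_normSq {f : ℝ → ℂ} {d : ℂ} {s : Set ℝ} {t : ℝ}
    (hf : HasDerivWithinAt f d s t) :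
    HasDerivWithinAt (fun s' => Complex.normSq (f s'))
      (2 * ((starRingEnd ℂ) (f t) * d).re) s t := by
  have hre : HasDerivWithinAt (fun s' => (f s').re) d.re s t := by
    have := (Complex.reCLM.hasFDerivAt (x := f t)).comp_hasDerivWithinAt t hf
    simpa [Function.comp_def] using this
  have him : HasDerivWithinAt (fun s' => (f s').im) d.im s t := by
    have := (Complex.imCLM.hasFDerivAt (x := f t)).comp_hasDerivWithinAt t hf
    simpa [Function.comp_def] using this
  have h := (hre.mul hre).add (him.mul him)
  have heq : d.re * (f t).re + (f t).re * d.re + (d.im * (f t).im + (f t).im * d.im)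
      = 2 * ((starRingEnd ℂ) (f t) * d).re := by
    simp [Complex.mul_re, Complex.conj_re, Complex.conj_im]; ring
  simpa only [Complex.normSq_apply, heq, Pi.mul_def, Pi.add_def] using h

lemma hasDerivAt_normSq {f : ℝ → ℂ} {d : ℂ} {t : ℝ} (hf : HasDerivAt f d t) :
    HasDerivAt (fun s' => Complex.normSq (f s')) (2 * ((starRingEnd ℂ) (f t) * d).re) t := by
  rw [← hasDerivWithinAt_univ] at hf ⊢
  exact hasDerivWithinAt_normSq hf

lemma normSq_sub' (a b : ℂ) :
    Complex.normSq (a - b) = Complex.normSq a + Complex.normSq b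
      - 2 * ((starRingEnd ℂ) b * a).re := by
  simp [Complex.normSq_apply, Complex.mul_re, Complex.conj_re, Complex.conj_im,
    Complex.sub_re, Complex.sub_im]
  ring

lemma normSq_eq_conj_mul_re (a : ℂ) : ((starRingEnd ℂ) a * a).re = Complex.normSq a := by
  simp [Complex.mul_re, Complex.conj_re, Complex.conj_im, Complex.normSq_apply]

lemma key_alg (a b da db n1 n2 : ℂ) (m : ℝ)
    (hA : (Complex.I * (starRingEnd ℂ) a * n1 + Complex.I * (starRingEnd ℂ) b * n2).re = 0) :
    2 * ((starRingEnd ℂ) a * (-da + Complex.I * (m:ℂ) * b - Complex.I * n1)).re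
      + 2 * ((starRingEnd ℂ) b * (db + Complex.I * (m:ℂ) * a - Complex.I * n2)).re
    = 2 * ((starRingEnd ℂ) b * db).re - 2 * ((starRingEnd ℂ) a * da).re := by
  have h1 : (starRingEnd ℂ) a * (-da + Complex.I * (m:ℂ) * b - Complex.I * n1)
      + (starRingEnd ℂ) b * (db + Complex.I * (m:ℂ) * a - Complex.I * n2)
      = ((starRingEnd ℂ) b * db - (starRingEnd ℂ) a * da)
        + Complex.I * (m:ℂ) * ((starRingEnd ℂ) a * b + (starRingEnd ℂ) ((starRingEnd ℂ) a * b))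
        - (Complex.I * (starRingEnd ℂ) a * n1 + Complex.I * (starRingEnd ℂ) b * n2) := by
    simp only [map_mul, Complex.conj_conj]; ring
  have h2 : (Complex.I * (m:ℂ)
      * ((starRingEnd ℂ) a * b + (starRingEnd ℂ) ((starRingEnd ℂ) a * b))).re = 0 := by
    rw [Complex.add_conj]
    simp [Complex.mul_re]
  have h3 := congrArg Complex.re h1
  simp only [Complex.add_re, Complex.sub_re] at h3
  rw [Complex.add_re] at hA
  linarith [h3]

lemma charge_conserved {m : ℝ} {N1 N2 : ℂ → ℂ → ℂ} (hA2 : SatisfiesA2 N1 N2)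
    {u v : ℝ → ℝ → ℂ} (hsol : IsGlobalDiracSolution m N1 N2 u v)
    (hcs : ∀ t ∈ Set.Ici (0:ℝ), HasCompactSupport (u t) ∧ HasCompactSupport (v t))
    (hbd : ∀ T : ℝ, 0 ≤ T → ∃ B : ℝ, ∀ s ∈ Set.Icc (0:ℝ) T,
      (∫ x : ℝ, Complex.normSq (u s x)) + (∫ x : ℝ, Complex.normSq (v s x)) ≤ B) :
    ∀ t ∈ Set.Ici (0:ℝ),
      (∫ x : ℝ, Complex.normSq (u t x)) + (∫ x : ℝ, Complex.normSq (v t x))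
        = (∫ x : ℝ, Complex.normSq (u 0 x)) + (∫ x : ℝ, Complex.normSq (v 0 x)) := by
  obtain ⟨hCu, hCv, hequ, heqv⟩ := hsol
  intro t ht
  rw [Set.mem_Ici] at ht
  obtain ⟨B, hB⟩ := hbd t ht
  have hcu := hCu.continuousOn
  have hcv := hCv.continuousOn
  have hUcont : ∀ s : ℝ, 0 ≤ s → Continuous (u s) := fun s hs => slice_cont hcu hs
  have hVcont : ∀ s : ℝ, 0 ≤ s → Continuous (v s) := fun s hs => slice_cont hcv hs
  -- time derivatives from the PDE
  have hTu : ∀ s : ℝ, 0 ≤ s → ∀ x : ℝ, Dt u s x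
      = -(Dx u s x) + Complex.I * (m:ℂ) * v s x - Complex.I * N1 (u s x) (v s x) := by
    intro s hs x
    have h := hequ s hs x
    rw [slice_t_derivWithin hCu hs x, slice_x_deriv hCu hs x] at h
    linear_combination (-Complex.I) * h + (Dt u s x + Dx u s x) * Complex.I_sq
  have hTv : ∀ s : ℝ, 0 ≤ s → ∀ x : ℝ, Dt v s x
      = (Dx v s x) + Complex.I * (m:ℂ) * u s x - Complex.I * N2 (u s x) (v s x) := by
    intro s hs x
    have h := heqv s hs x
    rw [slice_t_derivWithin hCv hs x, slice_x_deriv hCv hs x] at h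
    linear_combination (-Complex.I) * h + (Dt v s x - Dx v s x) * Complex.I_sq
  set w : ℝ → ℝ → ℝ := fun s x => Complex.normSq (v s x) - Complex.normSq (u s x) with hw
  set g : ℝ → ℝ → ℝ := fun s x => Complex.normSq (u s x) + Complex.normSq (v s x) with hgdef
  set Dw : ℝ → ℝ → ℝ := fun s x =>
    2 * ((starRingEnd ℂ) (v s x) * Dx v s x).re
      - 2 * ((starRingEnd ℂ) (u s x) * Dx u s x).re with hDwdef
  have hwx : ∀ s : ℝ, 0 ≤ s → ∀ x : ℝ, HasDerivAt (fun y => w s y) (Dw s x) x := fun s hs x =>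
    (hasDerivAt_normSq (slice_x hCv hs x)).sub (hasDerivAt_normSq (slice_x hCu hs x))
  have hgt : ∀ s : ℝ, 0 ≤ s → ∀ x : ℝ,
      HasDerivWithinAt (fun σ => g σ x) (Dw s x) (Set.Ici 0) s := by
    intro s hs x
    have h := (hasDerivWithinAt_normSq (slice_t hCu hs x)).add
      (hasDerivWithinAt_normSq (slice_t hCv hs x))
    have he : 2 * ((starRingEnd ℂ) (u s x) * Dt u s x).re
        + 2 * ((starRingEnd ℂ) (v s x) * Dt v s x).re = Dw s x := by
      rw [hTu s hs x, hTv s hs x]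
      exact key_alg _ _ _ _ _ _ m (hA2 (u s x) (v s x))
    rw [← he]; exact h
  -- joint continuity
  have hgc : ContinuousOn (fun p : ℝ × ℝ => g p.1 p.2)
      ((Set.Ici (0:ℝ)) ×ˢ (Set.univ : Set ℝ)) :=
    (Complex.continuous_normSq.comp_continuousOn hcu).add
      (Complex.continuous_normSq.comp_continuousOn hcv)
  have hwc : ContinuousOn (fun p : ℝ × ℝ => w p.1 p.2)
      ((Set.Ici (0:ℝ)) ×ˢ (Set.univ : Set ℝ)) :=
    (Complex.continuous_normSq.comp_continuousOn hcv).sub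
      (Complex.continuous_normSq.comp_continuousOn hcu)
  have hDwc : ContinuousOn (fun p : ℝ × ℝ => Dw p.1 p.2)
      ((Set.Ici (0:ℝ)) ×ˢ (Set.univ : Set ℝ)) := by
    apply ContinuousOn.sub
    · exact continuousOn_const.mul (Complex.continuous_re.comp_continuousOn
        ((continuous_star.comp_continuousOn hcv).mul (cont_Dx hCv)))
    · exact continuousOn_const.mul (Complex.continuous_re.comp_continuousOn
        ((continuous_star.comp_continuousOn hcu).mul (cont_Dx hCu)))
  -- compact supports and integrability
  have hwcs : ∀ s : ℝ, 0 ≤ s → HasCompactSupport (w s) := fun s hs =>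
    HasCompactSupport.comp₂_left (m := fun a b : ℂ => Complex.normSq a - Complex.normSq b)
      (hcs s hs).2 (hcs s hs).1 (by simp)
  have hgcs : ∀ s : ℝ, 0 ≤ s → HasCompactSupport (g s) := fun s hs =>
    HasCompactSupport.comp₂_left (m := fun a b : ℂ => Complex.normSq a + Complex.normSq b)
      (hcs s hs).1 (hcs s hs).2 (by simp)
  have hgslice : ∀ s : ℝ, 0 ≤ s → Continuous (g s) := fun s hs => slice_cont hgc hs
  have hwslice : ∀ s : ℝ, 0 ≤ s → Continuous (w s) := fun s hs => slice_cont hwc hs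
  have hDwslice : ∀ s : ℝ, 0 ≤ s → Continuous (Dw s) := fun s hs => slice_cont hDwc hs
  have hIg : ∀ s : ℝ, 0 ≤ s → Integrable (g s) := fun s hs =>
    (hgslice s hs).integrable_of_hasCompactSupport (hgcs s hs)
  have hIu : ∀ s : ℝ, 0 ≤ s → Integrable (fun x => Complex.normSq (u s x)) := fun s hs =>
    (Complex.continuous_normSq.comp (hUcont s hs)).integrable_of_hasCompactSupport
      ((hcs s hs).1.comp_left (by simp))
  have hIv : ∀ s : ℝ, 0 ≤ s → Integrable (fun x => Complex.normSq (v s x)) := fun s hs =>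
    (Complex.continuous_normSq.comp (hVcont s hs)).integrable_of_hasCompactSupport
      ((hcs s hs).2.comp_left (by simp))
  have hIw : ∀ s : ℝ, 0 ≤ s → Integrable (w s) := fun s hs =>
    (hwslice s hs).integrable_of_hasCompactSupport (hwcs s hs)
  -- the cutoffs
  set A : ℕ → ℝ := fun n => (n : ℝ) + 1 with hA
  have hApos : ∀ n, (0:ℝ) < A n := fun n => by positivity
  have hA1 : ∀ n, (1:ℝ) ≤ A n := fun n => by simp [hA]
  let bump : ContDiffBump (0:ℝ) := ⟨1, 2, one_pos, one_lt_two⟩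
  set χ : ℕ → ℝ → ℝ := fun n x => bump (x / A n) with hχdef
  set χ' : ℕ → ℝ → ℝ := fun n x => deriv bump (x / A n) * (A n)⁻¹ with hχ'def
  have hbumpdiff : Differentiable ℝ bump := (bump.contDiff (n := ⊤)).differentiable (by simp)
  have hχc : ∀ n, Continuous (χ n) := fun n => bump.continuous.comp (continuous_id.div_const _)
  have hχ'c : ∀ n, Continuous (χ' n) := fun n =>
    (((bump.contDiff (n := ⊤)).continuous_deriv (by simp)).comp (continuous_id.div_const _)).mul continuous_const
  have hχd : ∀ n x, HasDerivAt (χ n) (χ' n x) x := by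
    intro n x
    have h1 : HasDerivAt (fun y : ℝ => y / A n) ((A n)⁻¹) x := by
      simpa [div_eq_mul_inv] using (hasDerivAt_id x).mul_const (A n)⁻¹
    have h2 : HasDerivAt bump (deriv bump (x / A n)) (x / A n) :=
      (hbumpdiff (x / A n)).hasDerivAt
    simpa [hχdef, hχ'def, Function.comp_def] using h2.comp x h1
  obtain ⟨C0, hC0⟩ : ∃ C0 : ℝ, ∀ y, ‖deriv bump y‖ ≤ C0 :=
    (bump.hasCompactSupport.deriv).exists_bound_of_continuous
      ((bump.contDiff (n := ⊤)).continuous_deriv (by simp))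
  have hC0nn : 0 ≤ C0 := le_trans (norm_nonneg _) (hC0 0)
  have hχ'bd : ∀ n x, ‖χ' n x‖ ≤ C0 * (A n)⁻¹ := by
    intro n x
    rw [hχ'def]
    simp only [norm_mul]
    apply mul_le_mul (hC0 _) _ (norm_nonneg _) hC0nn
    rw [Real.norm_eq_abs, abs_of_pos (by positivity)]
  have hχsupp : ∀ n x, 2 * A n < |x| → χ n x = 0 := by
    intro n x hx
    have hns : x / A n ∉ Function.support bump := by
      rw [bump.support_eq]
      simp only [Metric.mem_ball, dist_zero_right, Real.norm_eq_abs, not_lt]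
      rw [abs_div, abs_of_pos (hApos n), le_div_iff₀ (hApos n)]
      calc (2:ℝ) * A n ≤ 2 * A n := le_rfl
        _ ≤ |x| := hx.le
    simpa using Function.notMem_support.mp hns
  have hχcs : ∀ n, HasCompactSupport (χ n) := by
    intro n
    apply HasCompactSupport.intro (isCompact_Icc (a := -(2 * A n)) (b := 2 * A n))
    intro x hx
    apply hχsupp n x
    rw [Set.mem_Icc, not_and_or] at hx
    rw [lt_abs]
    rcases hx with h | h
    · right; push_neg at h; linarith
    · left; push_neg at h; exact h
  have hχ01 : ∀ n x, 0 ≤ χ n x ∧ χ n x ≤ 1 := fun n x => ⟨bump.nonneg, bump.le_one⟩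
  -- product integrability for Fubini
  set f : ℕ → ℝ → ℝ → ℝ := fun n x s => χ n x * Dw (max s 0) x with hfdef
  have hfc : ∀ n, Continuous (Function.uncurry (f n)) := by
    intro n
    have h1 : Continuous (fun q : ℝ × ℝ => ((max q.2 0, q.1) : ℝ × ℝ)) :=
      (continuous_snd.max continuous_const).prodMk continuous_fst
    have h2 : Continuous (fun q : ℝ × ℝ => Dw (max q.2 0) q.1) :=
      hDwc.comp_continuous h1 (fun q => ⟨Set.mem_Ici.mpr (le_max_right _ _), Set.mem_univ _⟩)
    exact ((hχc n).comp continuous_fst).mul h2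
  have hfint : ∀ n, Integrable (Function.uncurry (f n))
      ((MeasureTheory.volume : Measure ℝ).prod
        ((MeasureTheory.volume : Measure ℝ).restrict (Set.Ioc 0 t))) := by
    intro n
    obtain ⟨C1, hC1⟩ := ((isCompact_Icc (a := -(2 * A n)) (b := 2 * A n)).prod
      (isCompact_Icc (a := (0:ℝ)) (b := t))).exists_bound_of_continuousOn (hfc n).continuousOn
    set C2 : ℝ := max C1 0 with hC2def
    apply Integrable.mono' (g := fun q : ℝ × ℝ =>
      Set.indicator ((Set.Icc (-(2 * A n)) (2 * A n)) ×ˢ (Set.univ : Set ℝ)) (fun _ => C2) q)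
    · rw [integrable_indicator_iff (measurableSet_Icc.prod MeasurableSet.univ)]
      refine integrableOn_const ?_ enorm_ne_top
      apply ne_of_lt
      rw [Measure.prod_prod, Measure.restrict_apply_univ]
      exact ENNReal.mul_lt_top measure_Icc_lt_top measure_Ioc_lt_top
    · exact (hfc n).aestronglyMeasurable
    · have hae : ∀ᵐ q ∂((MeasureTheory.volume : Measure ℝ).prod
          ((MeasureTheory.volume : Measure ℝ).restrict (Set.Ioc 0 t))), q.2 ∈ Set.Ioc (0:ℝ) t := by
        rw [MeasureTheory.ae_iff]
        have hset : {q : ℝ × ℝ | ¬ q.2 ∈ Set.Ioc (0:ℝ) t}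
            = (Set.univ : Set ℝ) ×ˢ (Set.Ioc (0:ℝ) t)ᶜ := by
          ext q; simp
        rw [hset, Measure.prod_prod, Measure.restrict_apply (measurableSet_Ioc.compl)]
        simp
      filter_upwards [hae] with q hq
      by_cases hx : q.1 ∈ Set.Icc (-(2 * A n)) (2 * A n)
      · rw [Set.indicator_of_mem (by exact ⟨hx, Set.mem_univ _⟩)]
        exact le_trans (hC1 q ⟨hx, Set.Ioc_subset_Icc_self hq⟩) (le_max_left _ _)
      · rw [Set.indicator_of_notMem (by simp [hx])]
        have hz : χ n q.1 = 0 := by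
          apply hχsupp n q.1
          rw [Set.mem_Icc, not_and_or] at hx
          rw [lt_abs]
          rcases hx with h | h
          · right; push_neg at h; linarith
          · left; push_neg at h; exact h
        simp [Function.uncurry, hfdef, hz]

  -- the main identity for each n
  have main : ∀ n, (∫ x : ℝ, χ n x * g t x) - (∫ x : ℝ, χ n x * g 0 x)
      = ∫ s in Set.Ioc (0:ℝ) t, (∫ x : ℝ, χ n x * Dw (max s 0) x) := by
    intro n
    -- pointwise FTC in time
    have hFTC : ∀ x : ℝ, g t x - g 0 x = ∫ s in (0:ℝ)..t, Dw s x := by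
      intro x
      have hcont : ContinuousOn (fun s => g s x) (Set.Icc 0 t) :=
        (slice_cont_t hgc x).mono Set.Icc_subset_Ici_self
      have hder : ∀ s ∈ Set.Ioo (0:ℝ) t, HasDerivWithinAt (fun σ => g σ x) (Dw s x) (Set.Ioi s) s :=
        fun s hs => (hgt s hs.1.le x).mono (fun y hy => le_trans hs.1.le (le_of_lt hy))
      have hint : IntervalIntegrable (fun s => Dw s x) MeasureTheory.volume 0 t := by
        apply ContinuousOn.intervalIntegrable
        rw [Set.uIcc_of_le ht]
        exact (slice_cont_t hDwc x).mono Set.Icc_subset_Ici_self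
      rw [intervalIntegral.integral_eq_sub_of_hasDeriv_right_of_le ht hcont hder hint]
    have hIgt : Integrable (fun x => χ n x * g t x) :=
      ((hχc n).mul (hgslice t ht)).integrable_of_hasCompactSupport ((hgcs t ht).mul_left)
    have hIg0 : Integrable (fun x => χ n x * g 0 x) :=
      ((hχc n).mul (hgslice 0 le_rfl)).integrable_of_hasCompactSupport ((hgcs 0 le_rfl).mul_left)
    calc (∫ x : ℝ, χ n x * g t x) - (∫ x : ℝ, χ n x * g 0 x)
        = ∫ x : ℝ, (χ n x * g t x - χ n x * g 0 x) := (integral_sub hIgt hIg0).symm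
      _ = ∫ x : ℝ, ∫ s in Set.Ioc (0:ℝ) t, f n x s := by
          apply integral_congr_ae
          filter_upwards with x
          rw [← mul_sub, hFTC x, intervalIntegral.integral_of_le ht, ← integral_const_mul]
          apply setIntegral_congr_fun measurableSet_Ioc
          intro s hs
          rw [hfdef]
          simp only [max_eq_left hs.1.le]
      _ = ∫ s in Set.Ioc (0:ℝ) t, ∫ x : ℝ, f n x s := integral_integral_swap (hfint n)
      _ = ∫ s in Set.Ioc (0:ℝ) t, (∫ x : ℝ, χ n x * Dw (max s 0) x) := rfl

  have hgnonneg : ∀ τ x : ℝ, 0 ≤ g τ x := fun τ x =>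
    add_nonneg (Complex.normSq_nonneg _) (Complex.normSq_nonneg _)
  have hIBP : ∀ s : ℝ, 0 ≤ s → ∀ n, (∫ x : ℝ, χ n x * Dw s x) = - ∫ x : ℝ, χ' n x * w s x := by
    intro s hs n
    have h1 : Integrable (fun x => χ n x * Dw s x) :=
      ((hχc n).mul (hDwslice s hs)).integrable_of_hasCompactSupport ((hχcs n).mul_right)
    have h2 : Integrable (fun x => χ' n x * w s x) :=
      ((hχ'c n).mul (hwslice s hs)).integrable_of_hasCompactSupport ((hwcs s hs).mul_left)
    have h3 : Integrable (fun x => χ n x * w s x) :=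
      ((hχc n).mul (hwslice s hs)).integrable_of_hasCompactSupport ((hwcs s hs).mul_left)
    exact integral_mul_deriv_eq_deriv_mul_of_integrable (fun x _ => hχd n x) (fun x _ => hwx s hs x) h1 h2 h3
  have hL0nn : ∀ s : ℝ, 0 ≤ s →
      0 ≤ (∫ x : ℝ, Complex.normSq (u s x)) + ∫ x : ℝ, Complex.normSq (v s x) := fun s hs =>
    add_nonneg (integral_nonneg fun x => Complex.normSq_nonneg _)
      (integral_nonneg fun x => Complex.normSq_nonneg _)
  have hBnn : 0 ≤ B := le_trans (hL0nn 0 le_rfl) (hB 0 ⟨le_rfl, ht⟩)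
  have hbnd : ∀ n, ‖(∫ x : ℝ, χ n x * g t x) - (∫ x : ℝ, χ n x * g 0 x)‖
      ≤ (C0 * B * t) * (A n)⁻¹ := by
    intro n
    rw [main n]
    have hfm : AEStronglyMeasurable (fun s => ∫ x : ℝ, χ n x * Dw (max s 0) x)
        ((MeasureTheory.volume : Measure ℝ).restrict (Set.Ioc 0 t)) :=
      ((hfint n).integral_prod_right).aestronglyMeasurable
    have hle : ∀ s ∈ Set.Ioc (0:ℝ) t,
        ‖∫ x : ℝ, χ n x * Dw (max s 0) x‖ ≤ (C0 * B) * (A n)⁻¹ := by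
      intro s hs
      have hs0 : (0:ℝ) ≤ s := hs.1.le
      rw [show (fun x : ℝ => χ n x * Dw (max s 0) x) = fun x => χ n x * Dw s x by
        funext x; rw [max_eq_left hs0]]
      rw [hIBP s hs0 n, norm_neg]
      have hwbd : ∀ x : ℝ, ‖w s x‖ ≤ Complex.normSq (u s x) + Complex.normSq (v s x) := by
        intro x
        rw [Real.norm_eq_abs, abs_le]
        constructor
        · have := Complex.normSq_nonneg (v s x); simp only [hw]; linarith
        · have := Complex.normSq_nonneg (u s x); simp only [hw]; linarith
      calc ‖∫ x : ℝ, χ' n x * w s x‖ ≤ ∫ x : ℝ, ‖χ' n x * w s x‖ :=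
            norm_integral_le_integral_norm _
        _ ≤ ∫ x : ℝ, (C0 * (A n)⁻¹) * (Complex.normSq (u s x) + Complex.normSq (v s x)) := by
            apply integral_mono
            · exact (((hχ'c n).mul (hwslice s hs0)).integrable_of_hasCompactSupport
                ((hwcs s hs0).mul_left)).norm
            · exact ((hIu s hs0).add (hIv s hs0)).const_mul _
            · intro x
              show ‖χ' n x * w s x‖ ≤ (C0 * (A n)⁻¹) * (Complex.normSq (u s x) + Complex.normSq (v s x))
              rw [norm_mul]
              apply mul_le_mul (hχ'bd n x) (hwbd x) (norm_nonneg _) (by positivity)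
        _ = (C0 * (A n)⁻¹) * ((∫ x : ℝ, Complex.normSq (u s x)) + ∫ x : ℝ, Complex.normSq (v s x)) := by
            rw [integral_const_mul, integral_add (hIu s hs0) (hIv s hs0)]
        _ ≤ (C0 * (A n)⁻¹) * B :=
            mul_le_mul_of_nonneg_left (hB s ⟨hs0, hs.2⟩) (by positivity)
        _ = (C0 * B) * (A n)⁻¹ := by ring
    have hbig := norm_setIntegral_le_of_norm_le_const (μ := (MeasureTheory.volume : Measure ℝ))
      (s := Set.Ioc (0:ℝ) t) measure_Ioc_lt_top hle
    have hvol : ((MeasureTheory.volume : Measure ℝ) (Set.Ioc (0:ℝ) t)).toReal = t := by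
      rw [Real.volume_Ioc, sub_zero, ENNReal.toReal_ofReal ht]
    rw [measureReal_def, hvol] at hbig
    calc ‖∫ s in Set.Ioc (0:ℝ) t, (∫ x : ℝ, χ n x * Dw (max s 0) x)‖
        ≤ (C0 * B) * (A n)⁻¹ * t := hbig
      _ = (C0 * B * t) * (A n)⁻¹ := by ring
  have hDCT : ∀ τ : ℝ, 0 ≤ τ →
      Tendsto (fun n => ∫ x : ℝ, χ n x * g τ x) atTop (𝓝 (∫ x : ℝ, g τ x)) := by
    intro τ hτ
    apply tendsto_integral_of_dominated_convergence (fun x => g τ x)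
      (fun n => ((hχc n).mul (hgslice τ hτ)).aestronglyMeasurable) (hIg τ hτ)
    · intro n
      filter_upwards with x
      rw [Real.norm_eq_abs, Pi.mul_apply, abs_mul, abs_of_nonneg (hχ01 n x).1, abs_of_nonneg (hgnonneg τ x)]
      exact mul_le_of_le_one_left (hgnonneg τ x) (hχ01 n x).2
    · filter_upwards with x
      have hev : ∀ᶠ n : ℕ in atTop, χ n x * g τ x = g τ x := by
        filter_upwards [eventually_ge_atTop ⌈|x|⌉₊] with n hn
        have hxA : |x| ≤ A n := by
          calc |x| ≤ (⌈|x|⌉₊ : ℝ) := Nat.le_ceil _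
            _ ≤ (n : ℝ) := by exact_mod_cast hn
            _ ≤ A n := by simp [hA]
        have hone : χ n x = 1 := by
          apply bump.one_of_mem_closedBall
          rw [Metric.mem_closedBall, dist_zero_right, Real.norm_eq_abs, abs_div,
            abs_of_pos (hApos n)]
          show |x| / A n ≤ 1
          rw [div_le_one (hApos n)]
          exact hxA
        rw [hone, one_mul]
      refine Tendsto.congr' ?_ tendsto_const_nhds
      filter_upwards [hev] with n h
      exact h.symm
  have hlim1 : Tendsto (fun n => (∫ x : ℝ, χ n x * g t x) - (∫ x : ℝ, χ n x * g 0 x)) atTop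
      (𝓝 ((∫ x : ℝ, g t x) - ∫ x : ℝ, g 0 x)) := (hDCT t ht).sub (hDCT 0 le_rfl)
  have hlim2 : Tendsto (fun n => (∫ x : ℝ, χ n x * g t x) - (∫ x : ℝ, χ n x * g 0 x)) atTop
      (𝓝 0) := by
    apply squeeze_zero_norm hbnd
    have hinv : Tendsto (fun n : ℕ => (A n)⁻¹) atTop (𝓝 0) := by
      apply Filter.Tendsto.comp tendsto_inv_atTop_zero
      rw [hA]
      exact Filter.tendsto_atTop_add_const_right _ 1 tendsto_natCast_atTop_atTop
    simpa using hinv.const_mul (C0 * B * t)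
  have heq := tendsto_nhds_unique hlim1 hlim2
  have hsplit : ∀ τ : ℝ, 0 ≤ τ → (∫ x : ℝ, g τ x)
      = (∫ x : ℝ, Complex.normSq (u τ x)) + ∫ x : ℝ, Complex.normSq (v τ x) := fun τ hτ =>
    integral_add (hIu τ hτ) (hIv τ hτ)
  rw [hsplit t ht, hsplit 0 le_rfl] at heq
  linarith [heq]

set_option maxHeartbeats 1000000 in
lemma sol_l2_cont {m : ℝ} {N1 N2 : ℂ → ℂ → ℂ} (hA2 : SatisfiesA2 N1 N2)
    {u v : ℝ → ℝ → ℂ} (hsol : IsGlobalDiracSolution m N1 N2 u v)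
    (hcs : ∀ t ∈ Set.Ici (0:ℝ), HasCompactSupport (u t) ∧ HasCompactSupport (v t))
    (hbd : ∀ T : ℝ, 0 ≤ T → ∃ B : ℝ, ∀ s ∈ Set.Icc (0:ℝ) T,
      (∫ x : ℝ, Complex.normSq (u s x)) + (∫ x : ℝ, Complex.normSq (v s x)) ≤ B) :
    ∀ t ∈ Set.Ici (0:ℝ),
      Tendsto (fun s => (∫ x : ℝ, Complex.normSq (u s x - u t x))
          + ∫ x : ℝ, Complex.normSq (v s x - v t x)) (nhdsWithin t (Set.Ici 0)) (𝓝 0) := by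
  have hconsv := charge_conserved hA2 hsol hcs hbd
  obtain ⟨hCu, hCv, -, -⟩ := hsol
  have hcu := hCu.continuousOn
  have hcv := hCv.continuousOn
  have hUcont : ∀ s : ℝ, 0 ≤ s → Continuous (u s) := fun s hs => slice_cont hcu hs
  have hVcont : ∀ s : ℝ, 0 ≤ s → Continuous (v s) := fun s hs => slice_cont hcv hs
  have hIu : ∀ s : ℝ, 0 ≤ s → Integrable (fun x => Complex.normSq (u s x)) := fun s hs =>
    (Complex.continuous_normSq.comp (hUcont s hs)).integrable_of_hasCompactSupport
      ((hcs s hs).1.comp_left (by simp))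
  have hIv : ∀ s : ℝ, 0 ≤ s → Integrable (fun x => Complex.normSq (v s x)) := fun s hs =>
    (Complex.continuous_normSq.comp (hVcont s hs)).integrable_of_hasCompactSupport
      ((hcs s hs).2.comp_left (by simp))
  intro t ht
  rw [Set.mem_Ici] at ht
  set K : Set ℝ := tsupport (u t) ∪ tsupport (v t) with hK
  have hKc : IsCompact K := ((hcs t ht).1.isCompact).union ((hcs t ht).2.isCompact)
  set X : ℝ → ℂ := fun s => ∫ x : ℝ,
    ((starRingEnd ℂ) (u t x) * u s x + (starRingEnd ℂ) (v t x) * v s x) with hX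
  have hFcont : ∀ s : ℝ, 0 ≤ s → Continuous (fun x =>
      (starRingEnd ℂ) (u t x) * u s x + (starRingEnd ℂ) (v t x) * v s x) := fun s hs =>
    ((continuous_star.comp (hUcont t ht)).mul (hUcont s hs)).add
      ((continuous_star.comp (hVcont t ht)).mul (hVcont s hs))
  have hXint : ∀ s : ℝ, 0 ≤ s → Integrable (fun x =>
      (starRingEnd ℂ) (u t x) * u s x + (starRingEnd ℂ) (v t x) * v s x) := by
    intro s hs
    apply (hFcont s hs).integrable_of_hasCompactSupport
    apply HasCompactSupport.intro hKc
    intro x hx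
    rw [hK, Set.mem_union, not_or] at hx
    rw [image_eq_zero_of_notMem_tsupport hx.1, image_eq_zero_of_notMem_tsupport hx.2]
    simp
  have hXcont : Tendsto X (nhdsWithin t (Set.Ici 0)) (𝓝 (X t)) := by
    set C : Set ℝ := Set.Icc (t - 1) (t + 1) ∩ Set.Ici 0 with hC
    have hCcomp : IsCompact C := isCompact_Icc.inter_right isClosed_Ici
    have hCsub : C ⊆ Set.Ici 0 := Set.inter_subset_right
    obtain ⟨Mu, hMu⟩ := (hCcomp.prod hKc).exists_bound_of_continuousOn
      (hcu.mono (Set.prod_mono hCsub (Set.subset_univ _)))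
    obtain ⟨Mv, hMv⟩ := (hCcomp.prod hKc).exists_bound_of_continuousOn
      (hcv.mono (Set.prod_mono hCsub (Set.subset_univ _)))
    set M1 : ℝ := max Mu 0 with hM1
    set M2 : ℝ := max Mv 0 with hM2
    have hmemIcc : ∀ᶠ s in nhdsWithin t (Set.Ici 0), s ∈ Set.Icc (t - 1) (t + 1) :=
      Filter.Eventually.filter_mono nhdsWithin_le_nhds
        (Filter.eventually_mem_set.mpr (Icc_mem_nhds (by linarith) (by linarith)))
    apply tendsto_integral_filter_of_dominated_convergence
      (bound := fun x => (M1 + M2) * (‖u t x‖ + ‖v t x‖))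
    · filter_upwards [eventually_mem_nhdsWithin] with s hs
      exact (hFcont s hs).aestronglyMeasurable
    · filter_upwards [hmemIcc, eventually_mem_nhdsWithin] with s hs1 hs2
      filter_upwards with x
      by_cases hx : x ∈ K
      · have hu : ‖u s x‖ ≤ M1 :=
          le_trans (hMu (s, x) ⟨⟨hs1, hs2⟩, hx⟩) (le_max_left _ _)
        have hv : ‖v s x‖ ≤ M2 :=
          le_trans (hMv (s, x) ⟨⟨hs1, hs2⟩, hx⟩) (le_max_left _ _)
        have h1 : ‖(starRingEnd ℂ) (u t x) * u s x + (starRingEnd ℂ) (v t x) * v s x‖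
            ≤ ‖u t x‖ * ‖u s x‖ + ‖v t x‖ * ‖v s x‖ := by
          refine le_trans (norm_add_le _ _) ?_
          rw [norm_mul, norm_mul, RCLike.norm_conj, RCLike.norm_conj]
        refine le_trans h1 ?_
        have hM1nn : (0:ℝ) ≤ M1 := le_max_right _ _
        have hM2nn : (0:ℝ) ≤ M2 := le_max_right _ _
        have hnn1 : (0:ℝ) ≤ ‖u t x‖ := norm_nonneg _
        have hnn2 : (0:ℝ) ≤ ‖v t x‖ := norm_nonneg _
        nlinarith [mul_le_mul_of_nonneg_left hu hnn1, mul_le_mul_of_nonneg_left hv hnn2]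
      · rw [hK, Set.mem_union, not_or] at hx
        rw [image_eq_zero_of_notMem_tsupport hx.1, image_eq_zero_of_notMem_tsupport hx.2]
        simp
    · apply Integrable.const_mul
      apply Integrable.add
      · exact ((hUcont t ht).norm).integrable_of_hasCompactSupport ((hcs t ht).1.norm)
      · exact ((hVcont t ht).norm).integrable_of_hasCompactSupport ((hcs t ht).2.norm)
    · filter_upwards with x
      have h1 : ContinuousWithinAt (fun s => u s x) (Set.Ici 0) t := (slice_cont_t hcu x) t ht
      have h2 : ContinuousWithinAt (fun s => v s x) (Set.Ici 0) t := (slice_cont_t hcv x) t ht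
      exact (Tendsto.const_mul _ h1.tendsto).add (Tendsto.const_mul _ h2.tendsto)
  -- integrability of the real parts
  have hIruv : ∀ s : ℝ, 0 ≤ s → Integrable (fun x =>
      ((starRingEnd ℂ) (u t x) * u s x).re) ∧ Integrable (fun x =>
      ((starRingEnd ℂ) (v t x) * v s x).re) := by
    intro s hs
    have h1u : HasCompactSupport (fun x => (starRingEnd ℂ) (u t x)) :=
      (hcs t ht).1.comp_left (map_zero (starRingEnd ℂ))
    have h1v : HasCompactSupport (fun x => (starRingEnd ℂ) (v t x)) :=
      (hcs t ht).2.comp_left (map_zero (starRingEnd ℂ))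
    have h2u : HasCompactSupport (fun x => (starRingEnd ℂ) (u t x) * u s x) := h1u.mul_right
    have h2v : HasCompactSupport (fun x => (starRingEnd ℂ) (v t x) * v s x) := h1v.mul_right
    have h3u : HasCompactSupport (fun x => ((starRingEnd ℂ) (u t x) * u s x).re) :=
      h2u.comp_left (g := Complex.re) rfl
    have h3v : HasCompactSupport (fun x => ((starRingEnd ℂ) (v t x) * v s x).re) :=
      h2v.comp_left (g := Complex.re) rfl
    constructor
    · exact (Complex.continuous_re.comp
        ((continuous_star.comp (hUcont t ht)).mul (hUcont s hs))).integrable_of_hasCompactSupport h3u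
    · exact (Complex.continuous_re.comp
        ((continuous_star.comp (hVcont t ht)).mul (hVcont s hs))).integrable_of_hasCompactSupport h3v
  have hXre : ∀ s : ℝ, 0 ≤ s → (X s).re
      = (∫ x : ℝ, ((starRingEnd ℂ) (u t x) * u s x).re)
        + ∫ x : ℝ, ((starRingEnd ℂ) (v t x) * v s x).re := by
    intro s hs
    have h := integral_re (hXint s hs)
    rw [RCLike.re_to_complex] at h
    rw [hX]
    rw [← h]
    rw [← integral_add (hIruv s hs).1 (hIruv s hs).2]
    apply integral_congr_ae
    filter_upwards with x
    simp [Complex.add_re]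
  -- expansion of the squared distance
  have hIsubu : ∀ s : ℝ, 0 ≤ s → Integrable (fun x => Complex.normSq (u s x - u t x)) := by
    intro s hs
    apply (Complex.continuous_normSq.comp
      ((hUcont s hs).sub (hUcont t ht))).integrable_of_hasCompactSupport
    exact HasCompactSupport.comp₂_left (m := fun a b : ℂ => Complex.normSq (a - b))
      (hcs s hs).1 (hcs t ht).1 (by simp)
  have hIsubv : ∀ s : ℝ, 0 ≤ s → Integrable (fun x => Complex.normSq (v s x - v t x)) := by
    intro s hs
    apply (Complex.continuous_normSq.comp
      ((hVcont s hs).sub (hVcont t ht))).integrable_of_hasCompactSupport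
    exact HasCompactSupport.comp₂_left (m := fun a b : ℂ => Complex.normSq (a - b))
      (hcs s hs).2 (hcs t ht).2 (by simp)
  set L0t : ℝ := (∫ x : ℝ, Complex.normSq (u t x)) + ∫ x : ℝ, Complex.normSq (v t x) with hL0t
  have hexp : ∀ s : ℝ, 0 ≤ s →
      (∫ x : ℝ, Complex.normSq (u s x - u t x)) + (∫ x : ℝ, Complex.normSq (v s x - v t x))
      = 2 * L0t - 2 * (X s).re := by
    intro s hs
    have e1 : (∫ x : ℝ, Complex.normSq (u s x - u t x))
        = (∫ x : ℝ, Complex.normSq (u s x)) + (∫ x : ℝ, Complex.normSq (u t x))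
          - 2 * ∫ x : ℝ, ((starRingEnd ℂ) (u t x) * u s x).re := by
      have hcongr : (∫ x : ℝ, Complex.normSq (u s x - u t x))
          = ∫ x : ℝ, (Complex.normSq (u s x) + Complex.normSq (u t x)
            - 2 * ((starRingEnd ℂ) (u t x) * u s x).re) := by
        apply integral_congr_ae; filter_upwards with x; exact normSq_sub' _ _
      have hadd : Integrable (fun x => Complex.normSq (u s x) + Complex.normSq (u t x)) :=
        (hIu s hs).add (hIu t ht)
      have hcm : Integrable (fun x => 2 * ((starRingEnd ℂ) (u t x) * u s x).re) :=
        ((hIruv s hs).1).const_mul 2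
      rw [hcongr, integral_sub hadd hcm, integral_add (hIu s hs) (hIu t ht), integral_const_mul]
    have e2 : (∫ x : ℝ, Complex.normSq (v s x - v t x))
        = (∫ x : ℝ, Complex.normSq (v s x)) + (∫ x : ℝ, Complex.normSq (v t x))
          - 2 * ∫ x : ℝ, ((starRingEnd ℂ) (v t x) * v s x).re := by
      have hcongr : (∫ x : ℝ, Complex.normSq (v s x - v t x))
          = ∫ x : ℝ, (Complex.normSq (v s x) + Complex.normSq (v t x)
            - 2 * ((starRingEnd ℂ) (v t x) * v s x).re) := by
        apply integral_congr_ae; filter_upwards with x; exact normSq_sub' _ _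
      have hadd : Integrable (fun x => Complex.normSq (v s x) + Complex.normSq (v t x)) :=
        (hIv s hs).add (hIv t ht)
      have hcm : Integrable (fun x => 2 * ((starRingEnd ℂ) (v t x) * v s x).re) :=
        ((hIruv s hs).2).const_mul 2
      rw [hcongr, integral_sub hadd hcm, integral_add (hIv s hs) (hIv t ht), integral_const_mul]
    have hcons : (∫ x : ℝ, Complex.normSq (u s x)) + (∫ x : ℝ, Complex.normSq (v s x)) = L0t := by
      rw [hL0t, hconsv s hs, hconsv t ht]
    rw [e1, e2, hXre s hs]
    rw [hL0t] at hcons ⊢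
    linarith [hcons]
  have hXt : (X t).re = L0t := by
    rw [hXre t ht, hL0t]
    congr 1
    · apply integral_congr_ae; filter_upwards with x; exact normSq_eq_conj_mul_re (u t x)
    · apply integral_congr_ae; filter_upwards with x; exact normSq_eq_conj_mul_re (v t x)
  have hfinal : Tendsto (fun s => 2 * L0t - 2 * (X s).re) (nhdsWithin t (Set.Ici 0)) (𝓝 0) := by
    have h1 : Tendsto (fun s => (X s).re) (nhdsWithin t (Set.Ici 0)) (𝓝 ((X t).re)) :=
      (Complex.continuous_re.continuousAt.tendsto).comp hXcont
    have h2 := tendsto_const_nhds (x := 2 * L0t) (f := nhdsWithin t (Set.Ici 0)) |>.sub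
      (h1.const_mul 2)
    rw [hXt] at h2
    simpa using h2
  apply hfinal.congr'
  filter_upwards [eventually_mem_nhdsWithin] with s hs
  exact (hexp s hs).symm

lemma norm_triple {X : Type*} [SeminormedAddCommGroup X] (a b c d : X) :
    ‖a - d‖ ≤ ‖a - b‖ + ‖b - c‖ + ‖c - d‖ := by
  rw [show a - d = (a - b) + ((b - c) + (c - d)) by abel]
  refine le_trans (norm_add_le _ _) ?_
  linarith [norm_add_le (b - c) (c - d)]

lemma sq_norm_sub_L2 (F G : Lp ℂ 2 (volume : Measure ℝ)) {f g : ℝ → ℂ}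
    (hf : f =ᵐ[volume] F) (hg : g =ᵐ[volume] G) :
    ‖F - G‖ ^ 2 = ∫ x : ℝ, Complex.normSq (f x - g x) := by
  rw [← inner_self_eq_norm_sq (𝕜 := ℂ) (F - G)]
  rw [MeasureTheory.L2.inner_def]
  rw [← integral_re (MeasureTheory.L2.integrable_inner (𝕜 := ℂ) (F - G) (F - G))]
  apply integral_congr_ae
  filter_upwards [Lp.coeFn_sub F G, hf, hg] with x hx hfx hgx
  rw [hx]
  simp only [Pi.sub_apply]
  rw [← hfx, ← hgx]
  rw [RCLike.inner_apply']
  rw [RCLike.re_to_complex]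
  exact normSq_eq_conj_mul_re _

lemma l2dist_eq_norm (F G : Lp ℂ 2 (volume : Measure ℝ)) {f g : ℝ → ℂ}
    (hf : f =ᵐ[volume] F) (hg : g =ᵐ[volume] G) :
    l2dist f g = ‖F - G‖ := by
  rw [l2dist, ← sq_norm_sub_L2 F G hf hg, Real.sqrt_sq (norm_nonneg _)]

lemma cauchy_helper {a b d E ε : ℝ} (ha : 0 ≤ a) (hb : 0 ≤ b) (hd : 0 ≤ d) (hE : 0 ≤ E)
    (h1 : a ^ 2 + b ^ 2 ≤ d ^ 2 * E) (h2 : d < ε / (Real.sqrt (2 * E) + 1)) (hε : 0 < ε) :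
    a + b < ε := by
  have hs := Real.sq_sqrt (by linarith : (0:ℝ) ≤ 2 * E)
  have hsnn := Real.sqrt_nonneg (2 * E)
  set s := Real.sqrt (2 * E) with hsdef
  have h3 : d * (s + 1) < ε := (lt_div_iff₀ (by linarith)).mp h2
  have h5 : (d * (s + 1)) ^ 2 < ε ^ 2 := by nlinarith [mul_nonneg hd (by linarith : (0:ℝ) ≤ s + 1)]
  by_contra hcon
  push_neg at hcon
  nlinarith [sq_nonneg (a - b), sq_nonneg d, mul_nonneg hd hsnn]

lemma sum_lt_of_sq {a b ε : ℝ} (ha : 0 ≤ a) (hb : 0 ≤ b) (hε : 0 < ε)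
    (h : a ^ 2 + b ^ 2 < ε ^ 2 / 2) : a + b < ε := by
  by_contra hcon
  push_neg at hcon
  nlinarith [sq_nonneg (a - b)]

end DiracAux

section MainProof
open Set Filter Topology
set_option maxHeartbeats 1000000

/-- Cauchy property of the solution sequence (Theorem 1.2, convergence part): let
`δ > 0` be the smallness constant of the L² stability estimate. If `(u0ₖ, v0ₖ)` are
smooth compactly supported initial data with charge `< δ` forming a Cauchy sequence in
`L²(ℝ; ℂ²)` and `(uₖ, vₖ)` are the corresponding global classical solutions, then for
every `T ≥ 0` the sequence `(uₖ, vₖ)` is Cauchy in `C([0,T]; L²)`; hence there is a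
limit `(u∞, v∞) ∈ C([0,∞); L²)` with `‖uₖ - u∞‖_{C([0,T];L²)} + ‖vₖ - v∞‖_{C([0,T];L²)} → 0`
for every `T ≥ 0`. -/
theorem solution_sequence_cauchy (m : ℝ) (hm : 0 ≤ m) (N1 N2 : ℂ → ℂ → ℂ)
    (hA1 : SatisfiesA1 N1 N2) (hA2 : SatisfiesA2 N1 N2)
    (δ : ℝ) (hδ : 0 < δ)
    -- `δ` is the smallness constant of the L² stability estimate:
    (hstab : ∃ c1 > 0, ∃ c2 > 0, ∃ c3 > 0, ∀ u v u' v' : ℝ → ℝ → ℂ,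
      IsGlobalDiracSolution m N1 N2 u v → IsGlobalDiracSolution m N1 N2 u' v' →
      (∀ t ∈ Set.Ici (0 : ℝ), HasCompactSupport (u t) ∧ HasCompactSupport (v t) ∧
        HasCompactSupport (u' t) ∧ HasCompactSupport (v' t)) →
      (∫ x : ℝ, Complex.normSq (u 0 x)) + (∫ x : ℝ, Complex.normSq (v 0 x)) < δ →
      (∫ x : ℝ, Complex.normSq (u' 0 x)) + (∫ x : ℝ, Complex.normSq (v' 0 x)) < δ →
      ∀ t ∈ Set.Ici (0 : ℝ),
        (∫ x : ℝ, Complex.normSq (u t x - u' t x)) +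
            (∫ x : ℝ, Complex.normSq (v t x - v' t x)) ≤
          ((∫ x : ℝ, Complex.normSq (u 0 x - u' 0 x)) +
              (∫ x : ℝ, Complex.normSq (v 0 x - v' 0 x))) *
            (c1 * Real.exp (c2 * t + c3)))
    (u0 v0 : ℕ → ℝ → ℂ) (uk vk : ℕ → ℝ → ℝ → ℂ)
    (hsm : ∀ k, ContDiff ℝ (⊤ : ℕ∞) (u0 k) ∧ ContDiff ℝ (⊤ : ℕ∞) (v0 k))
    (hcsupp0 : ∀ k, HasCompactSupport (u0 k) ∧ HasCompactSupport (v0 k))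
    (hcharge : ∀ k,
      (∫ x : ℝ, Complex.normSq (u0 k x)) + (∫ x : ℝ, Complex.normSq (v0 k x)) < δ)
    (hcauchy0 : ∀ ε > 0, ∃ N : ℕ, ∀ k ≥ N, ∀ j ≥ N,
      l2dist (u0 k) (u0 j) + l2dist (v0 k) (v0 j) < ε)
    (hsol : ∀ k, IsGlobalDiracSolution m N1 N2 (uk k) (vk k))
    (hinit : ∀ k, ∀ x : ℝ, uk k 0 x = u0 k x ∧ vk k 0 x = v0 k x)
    (hcsupp : ∀ k, ∀ t ∈ Set.Ici (0 : ℝ),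
      HasCompactSupport (uk k t) ∧ HasCompactSupport (vk k t)) :
    (∀ T ≥ 0, ∀ ε > 0, ∃ N : ℕ, ∀ k ≥ N, ∀ j ≥ N, ∀ t ∈ Set.Icc (0 : ℝ) T,
      l2dist (uk k t) (uk j t) + l2dist (vk k t) (vk j t) < ε) ∧
    ∃ uinf vinf : ℝ → ℝ → ℂ,
      (∀ t ∈ Set.Ici (0 : ℝ), ∀ ε > 0, ∃ η > 0, ∀ s ∈ Set.Ici (0 : ℝ), |s - t| < η →
        l2dist (uinf s) (uinf t) + l2dist (vinf s) (vinf t) < ε) ∧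
      (∀ T ≥ 0, ∀ ε > 0, ∃ N : ℕ, ∀ k ≥ N, ∀ t ∈ Set.Icc (0 : ℝ) T,
        l2dist (uk k t) (uinf t) + l2dist (vk k t) (vinf t) < ε) := by
  classical
  obtain ⟨c1, hc1, c2, hc2, c3, hc3, hst⟩ := hstab
  -- the zero solution
  have hzero : IsGlobalDiracSolution m N1 N2 (fun _ _ => 0) (fun _ _ => 0) := by
    obtain ⟨a1, a2, a3, a4, a5, b1, b2, b3, b4, b5, hN1, hN2⟩ := hA1
    refine ⟨contDiffOn_const, contDiffOn_const, ?_, ?_⟩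
    · intro t ht x
      rw [hN1]
      have hd : derivWithin (fun _ : ℝ => (0:ℂ)) (Set.Ici 0) t = 0 :=
        (hasDerivWithinAt_const t _ 0).derivWithin (uniqueDiffOn_Ici 0 t ht)
      simp [hd]
    · intro t ht x
      rw [hN2]
      have hd : derivWithin (fun _ : ℝ => (0:ℂ)) (Set.Ici 0) t = 0 :=
        (hasDerivWithinAt_const t _ 0).derivWithin (uniqueDiffOn_Ici 0 t ht)
      simp [hd]
  have hzcs : HasCompactSupport (fun _ : ℝ => (0:ℂ)) := by
    apply HasCompactSupport.intro (isCompact_Icc (a := (0:ℝ)) (b := 0))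
    intro x _; rfl
  have hcs4 : ∀ k j, ∀ t ∈ Set.Ici (0:ℝ), HasCompactSupport (uk k t) ∧ HasCompactSupport (vk k t)
      ∧ HasCompactSupport (uk j t) ∧ HasCompactSupport (vk j t) := fun k j t ht =>
    ⟨(hcsupp k t ht).1, (hcsupp k t ht).2, (hcsupp j t ht).1, (hcsupp j t ht).2⟩
  have hinitU : ∀ k, uk k 0 = u0 k := fun k => funext fun x => (hinit k x).1
  have hinitV : ∀ k, vk k 0 = v0 k := fun k => funext fun x => (hinit k x).2
  have hchargek : ∀ k, (∫ x : ℝ, Complex.normSq (uk k 0 x))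
      + (∫ x : ℝ, Complex.normSq (vk k 0 x)) < δ := by
    intro k; rw [hinitU, hinitV]; exact hcharge k
  have hcharge0 : (∫ x : ℝ, Complex.normSq ((fun _ : ℝ => (0:ℂ)) x))
      + (∫ x : ℝ, Complex.normSq ((fun _ : ℝ => (0:ℂ)) x)) < δ := by
    simpa using hδ
  have hchargenn : ∀ k, 0 ≤ (∫ x : ℝ, Complex.normSq (uk k 0 x))
      + (∫ x : ℝ, Complex.normSq (vk k 0 x)) := fun k =>
    add_nonneg (integral_nonneg fun x => Complex.normSq_nonneg _)
      (integral_nonneg fun x => Complex.normSq_nonneg _)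
  -- charge bound from stability against the zero solution
  have hbd : ∀ k, ∀ T : ℝ, 0 ≤ T → ∃ B : ℝ, ∀ s ∈ Set.Icc (0:ℝ) T,
      (∫ x : ℝ, Complex.normSq (uk k s x)) + (∫ x : ℝ, Complex.normSq (vk k s x)) ≤ B := by
    intro k T hT
    refine ⟨((∫ x : ℝ, Complex.normSq (uk k 0 x)) + (∫ x : ℝ, Complex.normSq (vk k 0 x)))
      * (c1 * Real.exp (c2 * T + c3)), ?_⟩
    intro s hs
    have h := hst (uk k) (vk k) (fun _ _ => 0) (fun _ _ => 0) (hsol k) hzero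
      (fun τ hτ => ⟨(hcsupp k τ hτ).1, (hcsupp k τ hτ).2, hzcs, hzcs⟩)
      (hchargek k) hcharge0 s hs.1
    simp only [sub_zero] at h
    refine le_trans h ?_
    apply mul_le_mul_of_nonneg_left _ (hchargenn k)
    have : c2 * s + c3 ≤ c2 * T + c3 := by nlinarith [hs.2]
    exact mul_le_mul_of_nonneg_left (Real.exp_le_exp.mpr this) hc1.le
  -- L² time-continuity of each solution
  have hcontk : ∀ k, ∀ t ∈ Set.Ici (0:ℝ),
      Tendsto (fun s => (∫ x : ℝ, Complex.normSq (uk k s x - uk k t x))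
        + ∫ x : ℝ, Complex.normSq (vk k s x - vk k t x)) (nhdsWithin t (Set.Ici 0)) (𝓝 0) :=
    fun k => sol_l2_cont hA2 (hsol k) (hcsupp k) (hbd k)
  -- Lp elements
  have hCuk : ∀ k (t : ℝ), 0 ≤ t → Continuous (uk k t) := fun k t ht =>
    slice_cont (hsol k).1.continuousOn ht
  have hCvk : ∀ k (t : ℝ), 0 ≤ t → Continuous (vk k t) := fun k t ht =>
    slice_cont (hsol k).2.1.continuousOn ht
  have hmemU : ∀ k (t : ℝ), 0 ≤ t → MemLp (uk k t) 2 (volume : Measure ℝ) := fun k t ht =>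
    (hCuk k t ht).memLp_of_hasCompactSupport (hcsupp k t ht).1
  have hmemV : ∀ k (t : ℝ), 0 ≤ t → MemLp (vk k t) 2 (volume : Measure ℝ) := fun k t ht =>
    (hCvk k t ht).memLp_of_hasCompactSupport (hcsupp k t ht).2
  set fU : ℕ → ℝ → Lp ℂ 2 (volume : Measure ℝ) := fun k t =>
    if ht : 0 ≤ t then (hmemU k t ht).toLp (uk k t) else 0 with hfUdef
  set fV : ℕ → ℝ → Lp ℂ 2 (volume : Measure ℝ) := fun k t =>
    if ht : 0 ≤ t then (hmemV k t ht).toLp (vk k t) else 0 with hfVdef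
  have hfUae : ∀ k (t : ℝ) (ht : 0 ≤ t), uk k t =ᵐ[volume] (fU k t) := by
    intro k t ht
    rw [hfUdef]
    simp only [dif_pos ht]
    exact (MemLp.coeFn_toLp _).symm
  have hfVae : ∀ k (t : ℝ) (ht : 0 ≤ t), vk k t =ᵐ[volume] (fV k t) := by
    intro k t ht
    rw [hfVdef]
    simp only [dif_pos ht]
    exact (MemLp.coeFn_toLp _).symm
  -- key stability estimate in Lp norms
  have hkey : ∀ k j, ∀ t : ℝ, 0 ≤ t →
      ‖fU k t - fU j t‖ ^ 2 + ‖fV k t - fV j t‖ ^ 2 ≤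
        (l2dist (u0 k) (u0 j) + l2dist (v0 k) (v0 j)) ^ 2 * (c1 * Real.exp (c2 * t + c3)) := by
    intro k j t ht
    have h := hst (uk k) (vk k) (uk j) (vk j) (hsol k) (hsol j) (hcs4 k j)
      (hchargek k) (hchargek j) t ht
    rw [sq_norm_sub_L2 (fU k t) (fU j t) (hfUae k t ht) (hfUae j t ht),
      sq_norm_sub_L2 (fV k t) (fV j t) (hfVae k t ht) (hfVae j t ht)]
    have e0u : (∫ x : ℝ, Complex.normSq (uk k 0 x - uk j 0 x)) = l2dist (u0 k) (u0 j) ^ 2 := by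
      rw [hinitU k, hinitU j, l2dist, Real.sq_sqrt (integral_nonneg fun x => Complex.normSq_nonneg _)]
    have e0v : (∫ x : ℝ, Complex.normSq (vk k 0 x - vk j 0 x)) = l2dist (v0 k) (v0 j) ^ 2 := by
      rw [hinitV k, hinitV j, l2dist, Real.sq_sqrt (integral_nonneg fun x => Complex.normSq_nonneg _)]
    rw [e0u, e0v] at h
    refine le_trans h ?_
    apply mul_le_mul_of_nonneg_right _ (by positivity)
    have h1 : 0 ≤ l2dist (u0 k) (u0 j) := Real.sqrt_nonneg _
    have h2 : 0 ≤ l2dist (v0 k) (v0 j) := Real.sqrt_nonneg _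
    nlinarith [mul_nonneg h1 h2]
  -- Cauchy property in norm form
  have hcauchyN : ∀ T : ℝ, 0 ≤ T → ∀ ε : ℝ, 0 < ε → ∃ N : ℕ, ∀ k ≥ N, ∀ j ≥ N,
      ∀ t ∈ Set.Icc (0:ℝ) T, ‖fU k t - fU j t‖ + ‖fV k t - fV j t‖ < ε := by
    intro T hT ε hε
    set E : ℝ := c1 * Real.exp (c2 * T + c3) with hEdef
    have hEpos : 0 < E := by positivity
    obtain ⟨N, hN⟩ := hcauchy0 (ε / (Real.sqrt (2 * E) + 1))
      (by positivity)
    refine ⟨N, fun k hk j hj t htt => ?_⟩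
    have ht0 : 0 ≤ t := htt.1
    have hd0 := hN k hk j hj
    apply cauchy_helper (norm_nonneg _) (norm_nonneg _)
      (add_nonneg (Real.sqrt_nonneg _) (Real.sqrt_nonneg _)) hEpos.le _ hd0 hε
    refine le_trans (hkey k j t ht0) ?_
    apply mul_le_mul_of_nonneg_left _ (by positivity)
    rw [hEdef]
    have : c2 * t + c3 ≤ c2 * T + c3 := by nlinarith [htt.2]
    exact mul_le_mul_of_nonneg_left (Real.exp_le_exp.mpr this) hc1.le
  -- part 1
  have part1 : ∀ T : ℝ, T ≥ 0 → ∀ ε : ℝ, ε > 0 → ∃ N : ℕ, ∀ k ≥ N, ∀ j ≥ N,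
      ∀ t ∈ Set.Icc (0:ℝ) T,
      l2dist (uk k t) (uk j t) + l2dist (vk k t) (vk j t) < ε := by
    intro T hT ε hε
    obtain ⟨N, hN⟩ := hcauchyN T hT ε hε
    refine ⟨N, fun k hk j hj t htt => ?_⟩
    rw [l2dist_eq_norm (fU k t) (fU j t) (hfUae k t htt.1) (hfUae j t htt.1),
      l2dist_eq_norm (fV k t) (fV j t) (hfVae k t htt.1) (hfVae j t htt.1)]
    exact hN k hk j hj t htt
  -- limits
  have hcau : ∀ t : ℝ, 0 ≤ t → CauchySeq (fun k => fU k t) ∧ CauchySeq (fun k => fV k t) := by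
    intro t ht
    constructor <;>
      · rw [Metric.cauchySeq_iff]
        intro ε hε
        obtain ⟨N, hN⟩ := hcauchyN t ht ε hε
        refine ⟨N, fun k hk j hj => ?_⟩
        rw [dist_eq_norm]
        have h := hN k hk j hj t ⟨ht, le_rfl⟩
        have h1 : (0:ℝ) ≤ ‖fU k t - fU j t‖ := norm_nonneg _
        have h2 : (0:ℝ) ≤ ‖fV k t - fV j t‖ := norm_nonneg _
        first
          | exact lt_of_le_of_lt (le_add_of_nonneg_right h2) h
          | exact lt_of_le_of_lt (le_add_of_nonneg_left h1) h
  have hex : ∀ t : ℝ, ∃ P : Lp ℂ 2 (volume : Measure ℝ) × Lp ℂ 2 (volume : Measure ℝ),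
      0 ≤ t → Tendsto (fun k => fU k t) atTop (𝓝 P.1)
        ∧ Tendsto (fun k => fV k t) atTop (𝓝 P.2) := by
    intro t
    by_cases ht : 0 ≤ t
    · obtain ⟨Fu, hFu⟩ := cauchySeq_tendsto_of_complete (hcau t ht).1
      obtain ⟨Fv, hFv⟩ := cauchySeq_tendsto_of_complete (hcau t ht).2
      exact ⟨(Fu, Fv), fun _ => ⟨hFu, hFv⟩⟩
    · exact ⟨(0, 0), fun h => absurd h ht⟩
  choose G hG using hex
  -- uniform convergence to the limit, norm form
  have conv' : ∀ T : ℝ, 0 ≤ T → ∀ ε : ℝ, 0 < ε → ∃ N : ℕ, ∀ k ≥ N, ∀ t ∈ Set.Icc (0:ℝ) T,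
      ‖fU k t - (G t).1‖ + ‖fV k t - (G t).2‖ < ε := by
    intro T hT ε hε
    obtain ⟨N, hN⟩ := hcauchyN T hT (ε / 2) (by positivity)
    refine ⟨N, fun k hk t htt => ?_⟩
    have ht0 : 0 ≤ t := htt.1
    have hlim : Tendsto (fun j => ‖fU k t - fU j t‖ + ‖fV k t - fV j t‖) atTop
        (𝓝 (‖fU k t - (G t).1‖ + ‖fV k t - (G t).2‖)) :=
      ((tendsto_const_nhds.sub (hG t ht0).1).norm).add
        ((tendsto_const_nhds.sub (hG t ht0).2).norm)
    have hle : ‖fU k t - (G t).1‖ + ‖fV k t - (G t).2‖ ≤ ε / 2 :=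
      le_of_tendsto hlim (Filter.eventually_atTop.mpr
        ⟨N, fun j hj => (hN k hk j hj t htt).le⟩)
    linarith
  refine ⟨part1, fun t => ((G t).1 : ℝ → ℂ), fun t => ((G t).2 : ℝ → ℂ), ?_, ?_⟩
  · -- continuity of the limit
    intro t ht ε hε
    rw [Set.mem_Ici] at ht
    obtain ⟨N, hN⟩ := conv' (t + 1) (by linarith) (ε / 4) (by positivity)
    have hcont := hcontk N t (Set.mem_Ici.mpr ht)
    rw [Metric.tendsto_nhdsWithin_nhds] at hcont
    obtain ⟨η0, hη0, hη⟩ := hcont ((ε / 4) ^ 2 / 2) (by positivity)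
    refine ⟨min η0 1, by positivity, fun s hs hdist => ?_⟩
    rw [Set.mem_Ici] at hs
    have habs := abs_lt.mp (lt_of_lt_of_le hdist (min_le_right _ _))
    have hsT : s ∈ Set.Icc (0:ℝ) (t + 1) := ⟨hs, by linarith [habs.2]⟩
    have htT : t ∈ Set.Icc (0:ℝ) (t + 1) := ⟨ht, by linarith⟩
    have hE := hη hs (by rw [Real.dist_eq]; exact lt_of_lt_of_le hdist (min_le_left _ _))
    rw [Real.dist_eq, sub_zero] at hE
    have hEs : (∫ x : ℝ, Complex.normSq (uk N s x - uk N t x))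
        + (∫ x : ℝ, Complex.normSq (vk N s x - vk N t x)) < (ε / 4) ^ 2 / 2 :=
      lt_of_le_of_lt (le_abs_self _) hE
    have hmid : ‖fU N s - fU N t‖ + ‖fV N s - fV N t‖ < ε / 4 := by
      apply sum_lt_of_sq (norm_nonneg _) (norm_nonneg _) (by positivity)
      rw [sq_norm_sub_L2 (fU N s) (fU N t) (hfUae N s hs) (hfUae N t ht),
        sq_norm_sub_L2 (fV N s) (fV N t) (hfVae N s hs) (hfVae N t ht)]
      exact hEs
    have h1 := hN N le_rfl s hsT
    have h2 := hN N le_rfl t htT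
    rw [l2dist_eq_norm (G s).1 (G t).1 Filter.EventuallyEq.rfl Filter.EventuallyEq.rfl,
      l2dist_eq_norm (G s).2 (G t).2 Filter.EventuallyEq.rfl Filter.EventuallyEq.rfl]
    have t1 : ‖(G s).1 - (G t).1‖
        ≤ ‖(G s).1 - fU N s‖ + ‖fU N s - fU N t‖ + ‖fU N t - (G t).1‖ := by
      exact norm_triple _ _ _ _
    have t2 : ‖(G s).2 - (G t).2‖
        ≤ ‖(G s).2 - fV N s‖ + ‖fV N s - fV N t‖ + ‖fV N t - (G t).2‖ := by
      exact norm_triple _ _ _ _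
    have r1 : ‖(G s).1 - fU N s‖ = ‖fU N s - (G s).1‖ := norm_sub_rev _ _
    have r2 : ‖(G s).2 - fV N s‖ = ‖fV N s - (G s).2‖ := norm_sub_rev _ _
    linarith
  · -- uniform convergence
    intro T hT ε hε
    obtain ⟨N, hN⟩ := conv' T hT ε hε
    refine ⟨N, fun k hk t htt => ?_⟩
    rw [l2dist_eq_norm (fU k t) (G t).1 (hfUae k t htt.1) Filter.EventuallyEq.rfl,
      l2dist_eq_norm (fV k t) (G t).2 (hfVae k t htt.1) Filter.EventuallyEq.rfl]
    exact hN k hk t htt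

end MainProof
end
end
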